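/- arXiv:2006.11857 — 2 statements merged into one kernel-verified Lean document; each statement's English description precedes it below -/
import Mathlib

section
/- Let μ > 0 and δ̂ > 0. For all x, y ∈ ℝⁿ, |f_μ(y) − f_μ(x) − ⟨∇f_μ(x), y − x⟩| ≤ (1/δ̂)^{(1−ν)/(1+ν)} · (L_ν/μ^{1−ν}) · ‖y − x‖² + δ̂ · L_ν · μ^{1+ν}. -/
open MeasureTheory Real
open scoped RealInnerProductSpace

namespace SmoothedAux

/-- `s^k ≤ k! exp s` for `s ≥ 0`. -/
lemma pow_le_factorial_mul_exp (s : ℝ) (hs : 0 ≤ s) (k : ℕ) :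
    s ^ k ≤ (k.factorial : ℝ) * rexp s := by
  have h1 : s ^ k / (k.factorial : ℝ) ≤ rexp s := by
    refine le_trans ?_ (Real.sum_le_exp_of_nonneg hs (k+1))
    exact Finset.single_le_sum (f := fun i => s ^ i / (i.factorial : ℝ))
      (fun i _ => by positivity) (Finset.self_mem_range_succ k)
  have hk : (0:ℝ) < (k.factorial : ℝ) := by positivity
  rw [div_le_iff₀ hk] at h1
  linarith [h1]

/-- The pointwise Gaussian domination: `(1+t)^K e^{c t} e^{-t²/2} ≤ D e^{-t²/8}`. -/
lemma pointwise_gauss_bound (K : ℕ) (c t : ℝ) (ht : 0 ≤ t) :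
    (1 + t) ^ K * (rexp (c * t) * rexp (-t ^ 2 / 2)) ≤
      ((1 + 16 ^ K * K.factorial) * rexp (1/8 + 4 * c ^ 2)) * rexp (-t ^ 2 / 8) := by
  have h1t : (0:ℝ) ≤ 1 + t := by linarith
  have hA : (1 + t) ^ K ≤ (1 + 16 ^ K * (K.factorial:ℝ)) * rexp (1/8 + t^2/8) := by
    have h2K : (1 + t) ^ (2*K) ≤ 16 ^ K * (K.factorial:ℝ) * rexp (1/8 + t^2/8) := by
      have hfac := pow_le_factorial_mul_exp ((1+t)^2/16) (by positivity) K
      have hmono : rexp ((1+t)^2/16) ≤ rexp (1/8 + t^2/8) := by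
        apply Real.exp_le_exp.2; nlinarith [sq_nonneg (t-1)]
      calc (1 + t) ^ (2*K) = ((1+t)^2/16) ^ K * 16 ^ K := by
            rw [div_pow, pow_mul]; field_simp
        _ ≤ ((K.factorial:ℝ) * rexp ((1+t)^2/16)) * 16 ^ K := by
            apply mul_le_mul_of_nonneg_right hfac (by positivity)
        _ ≤ ((K.factorial:ℝ) * rexp (1/8 + t^2/8)) * 16 ^ K := by
            apply mul_le_mul_of_nonneg_right _ (by positivity)
            exact mul_le_mul_of_nonneg_left hmono (by positivity)
        _ = 16 ^ K * (K.factorial:ℝ) * rexp (1/8 + t^2/8) := by ring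
    have hcases : (1 + t) ^ K ≤ 1 + (1+t)^(2*K) := by
      rcases le_total (1+t) 1 with h | h
      · have : (1+t)^K ≤ 1 := pow_le_one₀ h1t h
        linarith [pow_nonneg h1t (2*K)]
      · have : (1+t)^K ≤ (1+t)^(2*K) := pow_le_pow_right₀ h (by omega)
        linarith
    have hre : (1:ℝ) ≤ rexp (1/8 + t^2/8) := by
      rw [Real.one_le_exp_iff]; positivity
    calc (1 + t) ^ K ≤ 1 + (1+t)^(2*K) := hcases
      _ ≤ 1 * rexp (1/8 + t^2/8) + 16 ^ K * (K.factorial:ℝ) * rexp (1/8 + t^2/8) := by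
          nlinarith
      _ = (1 + 16 ^ K * (K.factorial:ℝ)) * rexp (1/8 + t^2/8) := by ring
  have hB : rexp (c * t) ≤ rexp (4 * c^2 + t^2/16) := by
    apply Real.exp_le_exp.2; nlinarith [sq_nonneg (t/4 - 2*c)]
  calc (1 + t) ^ K * (rexp (c * t) * rexp (-t ^ 2 / 2))
      ≤ ((1 + 16 ^ K * (K.factorial:ℝ)) * rexp (1/8 + t^2/8)) *
          (rexp (4 * c^2 + t^2/16) * rexp (-t ^ 2 / 2)) := by
        apply mul_le_mul hA
        · apply mul_le_mul_of_nonneg_right hB (by positivity)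
        · positivity
        · positivity
    _ = ((1 + 16 ^ K * (K.factorial:ℝ)) * rexp (1/8 + 4 * c ^ 2)) * rexp (-(5/16) * t ^ 2) := by
        simp only [mul_assoc, ← Real.exp_add]
        congr 2
        ring
    _ ≤ ((1 + 16 ^ K * (K.factorial:ℝ)) * rexp (1/8 + 4 * c ^ 2)) * rexp (-t ^ 2 / 8) := by
        apply mul_le_mul_of_nonneg_left _ (by positivity)
        apply Real.exp_le_exp.2; nlinarith [sq_nonneg t]

variable {n : ℕ}

local notation "E" => EuclideanSpace ℝ (Fin n)

lemma integrable_gauss_b {b : ℝ} (hb : 0 < b) :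
    Integrable (fun u : E => rexp (-b * ‖u‖ ^ 2)) := by
  have h := (GaussianFourier.integrable_cexp_neg_mul_sq_norm_add
    (b := (b:ℂ)) (by simpa using hb) 0 (0 : E)).norm
  refine h.congr ?_
  filter_upwards with u
  simp [Complex.norm_exp, ← Complex.ofReal_pow]

/-- Master integrability lemma. -/
lemma integrable_master (C c : ℝ) (K : ℕ) :
    Integrable (fun u : E => C * ((1 + ‖u‖) ^ K * (rexp (c * ‖u‖) * rexp (-‖u‖ ^ 2 / 2)))) := by
  apply Integrable.const_mul
  have hD : Integrable (fun u : E =>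
      ((1 + 16 ^ K * (K.factorial:ℝ)) * rexp (1/8 + 4 * c ^ 2)) * rexp (-(1/8) * ‖u‖ ^ 2)) :=
    (integrable_gauss_b (by norm_num)).const_mul _
  refine hD.mono' ?_ ?_
  · apply Continuous.aestronglyMeasurable; continuity
  · filter_upwards with u
    rw [Real.norm_eq_abs, abs_of_nonneg (by positivity)]
    calc (1 + ‖u‖) ^ K * (rexp (c * ‖u‖) * rexp (-‖u‖ ^ 2 / 2))
        ≤ ((1 + 16 ^ K * (K.factorial:ℝ)) * rexp (1/8 + 4 * c ^ 2)) * rexp (-‖u‖ ^ 2 / 8) :=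
          pointwise_gauss_bound K c ‖u‖ (norm_nonneg u)
      _ = ((1 + 16 ^ K * (K.factorial:ℝ)) * rexp (1/8 + 4 * c ^ 2)) * rexp (-(1/8) * ‖u‖ ^ 2) := by
          ring_nf

/-- Domination principle: anything bounded by the master function is integrable. -/
lemma integrable_of_le_master {V : Type*} [NormedAddCommGroup V]
    {F : E → V} (hF : AEStronglyMeasurable F volume) (C c : ℝ) (K : ℕ)
    (hb : ∀ u, ‖F u‖ ≤ C * ((1 + ‖u‖) ^ K * (rexp (c * ‖u‖) * rexp (-‖u‖ ^ 2 / 2)))) :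
    Integrable F :=
  (integrable_master C c K).mono' hF (Filter.Eventually.of_forall hb)

end SmoothedAux


namespace SmoothedAux2

/-- `t^ν ≤ 1 + t` for `t ≥ 0`, `0 ≤ ν ≤ 1`. -/
lemma rpow_le_one_add (t ν : ℝ) (ht : 0 ≤ t) (hν0 : 0 ≤ ν) (hν1 : ν ≤ 1) :
    t ^ ν ≤ 1 + t := by
  rcases le_total t 1 with h | h
  · have : t ^ ν ≤ 1 := Real.rpow_le_one ht h hν0
    linarith
  · have h2 : t ^ ν ≤ t ^ (1:ℝ) := Real.rpow_le_rpow_of_exponent_le h hν1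
    rw [Real.rpow_one] at h2; linarith

lemma grad_norm_le {n : ℕ} (f : EuclideanSpace ℝ (Fin n) → ℝ) (ν Lν : ℝ)
    (hHolder : ∀ x y : EuclideanSpace ℝ (Fin n),
      ‖gradient f y - gradient f x‖ ≤ Lν * ‖y - x‖ ^ ν)
    (z w : EuclideanSpace ℝ (Fin n)) :
    ‖gradient f z‖ ≤ ‖gradient f w‖ + Lν * ‖z - w‖ ^ ν := by
  have h1 := hHolder w z
  have h2 : ‖gradient f z‖ ≤ ‖gradient f w‖ + ‖gradient f z - gradient f w‖ :=
    norm_le_norm_add_norm_sub' _ _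
  linarith

lemma fderiv_eq_inner_gradient {n : ℕ} (f : EuclideanSpace ℝ (Fin n) → ℝ)
    (z v : EuclideanSpace ℝ (Fin n)) (hdz : DifferentiableAt ℝ f z) :
    fderiv ℝ f z v = ⟪gradient f z, v⟫ := by
  have h := hdz.hasGradientAt.hasFDerivAt
  rw [h.fderiv]
  simp [InnerProductSpace.toDual_apply_apply]

/-- Growth bound via mean value inequality. -/
lemma f_growth {n : ℕ} (f : EuclideanSpace ℝ (Fin n) → ℝ) (ν Lν : ℝ)
    (hν0 : 0 ≤ ν) (hL : 0 ≤ Lν)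
    (hdiff : Differentiable ℝ f)
    (hHolder : ∀ x y : EuclideanSpace ℝ (Fin n),
      ‖gradient f y - gradient f x‖ ≤ Lν * ‖y - x‖ ^ ν)
    (z w : EuclideanSpace ℝ (Fin n)) :
    |f z - f w| ≤ (‖gradient f w‖ + Lν * ‖z - w‖ ^ ν) * ‖z - w‖ := by
  set C : ℝ := ‖gradient f w‖ + Lν * ‖z - w‖ ^ ν with hC
  have hseg : ∀ c ∈ segment ℝ w z, ‖fderiv ℝ f c‖ ≤ C := by
    intro c hc
    obtain ⟨a, b, ha, hb, hab, rfl⟩ := hc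
    have hcw : ‖(a • w + b • z) - w‖ ≤ ‖z - w‖ := by
      have he : (a • w + b • z) - w = b • (z - w) := by
        rw [show a = 1 - b by linarith]
        module
      rw [he, norm_smul, Real.norm_eq_abs, abs_of_nonneg hb]
      nlinarith [norm_nonneg (z - w)]
    have h1 : ‖fderiv ℝ f (a • w + b • z)‖ = ‖gradient f (a • w + b • z)‖ := by
      have h := (hdiff (a • w + b • z)).hasGradientAt.hasFDerivAt
      rw [h.fderiv]
      exact (InnerProductSpace.toDual ℝ _).norm_map _
    rw [h1]
    calc ‖gradient f (a • w + b • z)‖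
        ≤ ‖gradient f w‖ + Lν * ‖(a • w + b • z) - w‖ ^ ν :=
          grad_norm_le f ν Lν hHolder _ _
      _ ≤ C := by
          rw [hC]
          have : ‖(a • w + b • z) - w‖ ^ ν ≤ ‖z - w‖ ^ ν :=
            Real.rpow_le_rpow (norm_nonneg _) hcw hν0
          nlinarith
  have := Convex.norm_image_sub_le_of_norm_hasFDerivWithin_le
    (f := f) (f' := fun c => fderiv ℝ f c) (s := segment ℝ w z) (C := C)
    (fun c _ => (hdiff c).hasFDerivAt.hasFDerivWithinAt)
    hseg (convex_segment w z) (left_mem_segment ℝ w z) (right_mem_segment ℝ w z)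
  calc |f z - f w| = ‖f z - f w‖ := rfl
    _ ≤ C * ‖z - w‖ := this

end SmoothedAux2


namespace SmoothedAux3

lemma rpow_le_one_add (t ν : ℝ) (ht : 0 ≤ t) (hν0 : 0 ≤ ν) (hν1 : ν ≤ 1) :
    t ^ ν ≤ 1 + t := by
  rcases le_total t 1 with h | h
  · have : t ^ ν ≤ 1 := Real.rpow_le_one ht h hν0
    linarith
  · have h2 : t ^ ν ≤ t ^ (1:ℝ) := Real.rpow_le_rpow_of_exponent_le h hν1
    rw [Real.rpow_one] at h2; linarith


lemma poly_dom (F A L ρ μ r : ℝ) (hF : 0 ≤ F) (hA : 0 ≤ A) (hL : 0 ≤ L) (hρ : 0 ≤ ρ)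
    (hμ : 0 ≤ μ) (hr : 0 ≤ r) :
    F + (A + L * (1 + ρ + μ * r)) * (ρ + μ * r) ≤
      (F + (A + L * (1 + ρ + μ)) * (ρ + μ)) * (1 + r) ^ 2 := by
  have e1 : F + (A + L * (1 + ρ + μ * r)) * (ρ + μ * r) =
      (F + (A + L * (1 + ρ)) * ρ) + ((A + L * (1 + ρ)) * μ + L * μ * ρ) * r
        + (L * μ ^ 2) * r ^ 2 := by ring
  set C := F + (A + L * (1 + ρ + μ)) * (ρ + μ) with hC
  have i1 : 0 ≤ A * μ := by positivity
  have i2 : 0 ≤ L * μ := by positivity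
  have i3 : 0 ≤ L * ρ * μ := by positivity
  have i4 : 0 ≤ L * μ * μ := by positivity
  have i5 : 0 ≤ A * ρ := by positivity
  have i6 : 0 ≤ L * ρ := by positivity
  have i7 : 0 ≤ L * ρ * ρ := by positivity
  have h0 : (F + (A + L * (1 + ρ)) * ρ) ≤ C := by rw [hC]; nlinarith
  have h1 : ((A + L * (1 + ρ)) * μ + L * μ * ρ) ≤ C := by rw [hC]; nlinarith
  have h2 : (L * μ ^ 2) ≤ C := by rw [hC]; nlinarith
  have hC0 : 0 ≤ C := by rw [hC]; nlinarith
  rw [e1]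
  nlinarith [mul_nonneg hC0 hr, mul_nonneg hC0 (mul_nonneg hr hr),
    mul_le_mul_of_nonneg_right h1 hr, mul_le_mul_of_nonneg_right h2 (mul_nonneg hr hr),
    sq_nonneg r]

variable {n : ℕ}

lemma gradient_measurable (f : EuclideanSpace ℝ (Fin n) → ℝ) :
    Measurable (gradient f) := by
  have : gradient f = fun z => (InnerProductSpace.toDual ℝ
      (EuclideanSpace ℝ (Fin n))).symm (fderiv ℝ f z) := rfl
  rw [this]
  exact ((InnerProductSpace.toDual ℝ _).symm.continuous.measurable).comp
    (measurable_fderiv ℝ f)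

lemma grad_poly (f : EuclideanSpace ℝ (Fin n) → ℝ) (ν Lν μ : ℝ)
    (hν0 : 0 ≤ ν) (hν1 : ν ≤ 1) (hL : 0 ≤ Lν) (hμ : 0 < μ)
    (hHolder : ∀ x y : EuclideanSpace ℝ (Fin n),
      ‖gradient f y - gradient f x‖ ≤ Lν * ‖y - x‖ ^ ν)
    (x : EuclideanSpace ℝ (Fin n)) (ρ : ℝ) (hρ : 0 ≤ ρ)
    (w u : EuclideanSpace ℝ (Fin n)) (hw : ‖w‖ ≤ ρ) :
    ‖gradient f (x + w + μ • u)‖ ≤ (‖gradient f x‖ + Lν * (1 + ρ + μ)) * (1 + ‖u‖) := by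
  have h1 : ‖gradient f (x + w + μ • u)‖ ≤
      ‖gradient f x‖ + Lν * ‖(x + w + μ • u) - x‖ ^ ν := by
    have h2 := hHolder x (x + w + μ • u)
    have h3 : ‖gradient f (x + w + μ • u)‖ ≤
        ‖gradient f x‖ + ‖gradient f (x + w + μ • u) - gradient f x‖ :=
      norm_le_norm_add_norm_sub' _ _
    linarith
  have hs : ‖(x + w + μ • u) - x‖ ≤ ρ + μ * ‖u‖ := by
    have : (x + w + μ • u) - x = w + μ • u := by abel
    rw [this]
    calc ‖w + μ • u‖ ≤ ‖w‖ + ‖μ • u‖ := norm_add_le _ _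
      _ ≤ ρ + μ * ‖u‖ := by
          rw [norm_smul, Real.norm_eq_abs, abs_of_pos hμ]; linarith
  have hpow : ‖(x + w + μ • u) - x‖ ^ ν ≤ 1 + ρ + μ * ‖u‖ := by
    calc ‖(x + w + μ • u) - x‖ ^ ν ≤ 1 + ‖(x + w + μ • u) - x‖ :=
          rpow_le_one_add _ ν (norm_nonneg _) hν0 hν1
      _ ≤ 1 + ρ + μ * ‖u‖ := by linarith
  have hu : (0:ℝ) ≤ ‖u‖ := norm_nonneg u
  have hgx : (0:ℝ) ≤ ‖gradient f x‖ := norm_nonneg _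
  have h4 : Lν * ‖(x + w + μ • u) - x‖ ^ ν ≤ Lν * (1 + ρ + μ * ‖u‖) :=
    mul_le_mul_of_nonneg_left hpow hL
  nlinarith [mul_nonneg hL hu, mul_nonneg (mul_nonneg hL hμ.le) hu]

lemma f_poly (f : EuclideanSpace ℝ (Fin n) → ℝ) (ν Lν μ : ℝ)
    (hν0 : 0 ≤ ν) (hν1 : ν ≤ 1) (hL : 0 ≤ Lν) (hμ : 0 < μ)
    (hdiff : Differentiable ℝ f)
    (hHolder : ∀ x y : EuclideanSpace ℝ (Fin n),
      ‖gradient f y - gradient f x‖ ≤ Lν * ‖y - x‖ ^ ν)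
    (x : EuclideanSpace ℝ (Fin n)) (ρ : ℝ) (hρ : 0 ≤ ρ)
    (w u : EuclideanSpace ℝ (Fin n)) (hw : ‖w‖ ≤ ρ) :
    |f (x + w + μ • u)| ≤
      (|f x| + (‖gradient f x‖ + Lν * (1 + ρ + μ)) * (ρ + μ)) * (1 + ‖u‖) ^ 2 := by
  have hgrow := SmoothedAux2.f_growth f ν Lν hν0 hL hdiff hHolder (x + w + μ • u) x
  have hs : ‖(x + w + μ • u) - x‖ ≤ ρ + μ * ‖u‖ := by
    have : (x + w + μ • u) - x = w + μ • u := by abel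
    rw [this]
    calc ‖w + μ • u‖ ≤ ‖w‖ + ‖μ • u‖ := norm_add_le _ _
      _ ≤ ρ + μ * ‖u‖ := by
          rw [norm_smul, Real.norm_eq_abs, abs_of_pos hμ]; linarith
  have hpow : ‖(x + w + μ • u) - x‖ ^ ν ≤ 1 + ρ + μ * ‖u‖ := by
    calc ‖(x + w + μ • u) - x‖ ^ ν ≤ 1 + ‖(x + w + μ • u) - x‖ :=
          rpow_le_one_add _ ν (norm_nonneg _) hν0 hν1
      _ ≤ 1 + ρ + μ * ‖u‖ := by linarith
  have hu : (0:ℝ) ≤ ‖u‖ := norm_nonneg u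
  have hgx : (0:ℝ) ≤ ‖gradient f x‖ := norm_nonneg _
  have hfx : (0:ℝ) ≤ |f x| := abs_nonneg _
  have hsn : (0:ℝ) ≤ ‖(x + w + μ • u) - x‖ := norm_nonneg _
  have hpn : (0:ℝ) ≤ ‖(x + w + μ • u) - x‖ ^ ν := Real.rpow_nonneg hsn ν
  have h1 : |f (x + w + μ • u)| ≤ |f x| +
      (‖gradient f x‖ + Lν * (1 + ρ + μ * ‖u‖)) * (ρ + μ * ‖u‖) := by
    have habs : |f (x + w + μ • u)| ≤ |f x| + |f (x + w + μ • u) - f x| := by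
      have := abs_sub_abs_le_abs_sub (f (x + w + μ • u)) (f x)
      have h2 := le_abs_self (f (x + w + μ • u))
      have h3 := abs_abs (f (x + w + μ • u))
      nlinarith [abs_nonneg (f (x + w + μ • u) - f x)]
    have hstep : (‖gradient f x‖ + Lν * ‖(x + w + μ • u) - x‖ ^ ν) *
        ‖(x + w + μ • u) - x‖ ≤
        (‖gradient f x‖ + Lν * (1 + ρ + μ * ‖u‖)) * (ρ + μ * ‖u‖) := by
      apply mul_le_mul
      · have := mul_le_mul_of_nonneg_left hpow hL; linarith
      · exact hs
      · exact hsn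
      · have := mul_le_mul_of_nonneg_left hpow hL
        nlinarith [mul_nonneg hL hpn]
    linarith
  have h2 := poly_dom (|f x|) ‖gradient f x‖ Lν ρ μ ‖u‖ hfx hgx hL hρ hμ.le hu
  linarith

end SmoothedAux3


namespace SmoothedAux4

variable {n : ℕ}

lemma gauss_cont : Continuous (fun u : EuclideanSpace ℝ (Fin n) => rexp (-‖u‖ ^ 2 / 2)) := by
  continuity

lemma affine_cont (x : EuclideanSpace ℝ (Fin n)) (μ : ℝ) :
    Continuous (fun u : EuclideanSpace ℝ (Fin n) => x + μ • u) :=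
  continuous_const.add (continuous_const_smul μ)

lemma eta_hasDerivAt (f : EuclideanSpace ℝ (Fin n) → ℝ) (ν Lν μ : ℝ)
    (hν0 : 0 ≤ ν) (hν1 : ν ≤ 1) (hL : 0 ≤ Lν) (hμ : 0 < μ)
    (hdiff : Differentiable ℝ f)
    (hHolder : ∀ x y : EuclideanSpace ℝ (Fin n),
      ‖gradient f y - gradient f x‖ ≤ Lν * ‖y - x‖ ^ ν)
    (x h : EuclideanSpace ℝ (Fin n)) (t₀ : ℝ) :
    Integrable (fun u : EuclideanSpace ℝ (Fin n) =>
        ⟪gradient f (x + t₀ • h + μ • u), h⟫ * rexp (-‖u‖ ^ 2 / 2)) ∧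
      HasDerivAt (fun t : ℝ => ∫ u : EuclideanSpace ℝ (Fin n),
          f (x + t • h + μ • u) * rexp (-‖u‖ ^ 2 / 2))
        (∫ u : EuclideanSpace ℝ (Fin n),
          ⟪gradient f (x + t₀ • h + μ • u), h⟫ * rexp (-‖u‖ ^ 2 / 2)) t₀ := by
  set ρ : ℝ := (|t₀| + 1) * ‖h‖ with hρdef
  have hρ : 0 ≤ ρ := by positivity
  set CG : ℝ := ‖gradient f x‖ + Lν * (1 + ρ + μ) with hCG
  have hCG0 : 0 ≤ CG := by
    rw [hCG]; have := norm_nonneg (gradient f x); nlinarith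
  set CF : ℝ := |f x| + CG * (ρ + μ) with hCF
  have key := hasDerivAt_integral_of_dominated_loc_of_deriv_le
    (μ := (volume : Measure (EuclideanSpace ℝ (Fin n)))) (x₀ := t₀)
    (F := fun t u => f (x + t • h + μ • u) * rexp (-‖u‖ ^ 2 / 2))
    (F' := fun t u => ⟪gradient f (x + t • h + μ • u), h⟫ * rexp (-‖u‖ ^ 2 / 2))
    (bound := fun u => (CG * ‖h‖) * ((1 + ‖u‖) ^ 3 * (rexp (0 * ‖u‖) * rexp (-‖u‖ ^ 2 / 2))))
    (s := Metric.ball t₀ 1) (Metric.ball_mem_nhds t₀ one_pos) ?_ ?_ ?_ ?_ ?_ ?_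
  · exact ⟨key.1, key.2⟩
  · -- measurability of F t
    refine Filter.Eventually.of_forall (fun t => ?_)
    exact ((hdiff.continuous.comp (affine_cont (x + t • h) μ)).mul gauss_cont).aestronglyMeasurable
  · -- integrability of F t₀
    apply SmoothedAux.integrable_of_le_master
      (((hdiff.continuous.comp (affine_cont (x + t₀ • h) μ)).mul gauss_cont).aestronglyMeasurable)
      CF 0 3
    intro u
    have hw : ‖t₀ • h‖ ≤ ρ := by
      rw [norm_smul, Real.norm_eq_abs, hρdef]
      nlinarith [norm_nonneg h, abs_nonneg t₀]
    have hfp := SmoothedAux3.f_poly f ν Lν μ hν0 hν1 hL hμ hdiff hHolder x ρ hρ (t₀ • h) u hw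
    have h1u : (1:ℝ) ≤ 1 + ‖u‖ := by linarith [norm_nonneg u]
    have hpow : (1 + ‖u‖) ^ 2 ≤ (1 + ‖u‖) ^ 3 := pow_le_pow_right₀ h1u (by norm_num)
    have hge : (0:ℝ) < rexp (-‖u‖ ^ 2 / 2) := Real.exp_pos _
    simp only [Pi.mul_apply, Function.comp_apply]
    rw [norm_mul, Real.norm_eq_abs, Real.norm_eq_abs, abs_of_pos hge]
    rw [zero_mul, Real.exp_zero, one_mul]
    calc |f (x + t₀ • h + μ • u)| * rexp (-‖u‖ ^ 2 / 2)
        ≤ (CF * (1 + ‖u‖) ^ 2) * rexp (-‖u‖ ^ 2 / 2) := by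
          apply mul_le_mul_of_nonneg_right _ hge.le
          rw [hCF, hCG]; exact hfp
      _ ≤ (CF * (1 + ‖u‖) ^ 3) * rexp (-‖u‖ ^ 2 / 2) := by
          apply mul_le_mul_of_nonneg_right _ hge.le
          apply mul_le_mul_of_nonneg_left hpow
          rw [hCF]; nlinarith [abs_nonneg (f x), mul_nonneg hCG0 (by linarith : (0:ℝ) ≤ ρ + μ)]
      _ = CF * ((1 + ‖u‖) ^ 3 * rexp (-‖u‖ ^ 2 / 2)) := by ring
  · -- measurability of F' t₀
    apply Measurable.aestronglyMeasurable
    apply Measurable.mul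
    · exact ((SmoothedAux3.gradient_measurable f).comp
        (affine_cont (x + t₀ • h) μ).measurable).inner measurable_const
    · exact gauss_cont.measurable
  · -- bound
    refine Filter.Eventually.of_forall (fun u => fun t ht => ?_)
    have htt : |t| ≤ |t₀| + 1 := by
      have := Metric.mem_ball.1 ht
      rw [Real.dist_eq] at this
      calc |t| = |t₀ + (t - t₀)| := by ring_nf
        _ ≤ |t₀| + |t - t₀| := abs_add_le _ _
        _ ≤ |t₀| + 1 := by linarith
    have hw : ‖t • h‖ ≤ ρ := by
      rw [norm_smul, Real.norm_eq_abs, hρdef]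
      nlinarith [norm_nonneg h, abs_nonneg t]
    have hgp := SmoothedAux3.grad_poly f ν Lν μ hν0 hν1 hL hμ hHolder x ρ hρ (t • h) u hw
    have hge : (0:ℝ) < rexp (-‖u‖ ^ 2 / 2) := Real.exp_pos _
    have h1u : (1:ℝ) ≤ 1 + ‖u‖ := by linarith [norm_nonneg u]
    have hpow : (1 + ‖u‖) ≤ (1 + ‖u‖) ^ 3 := le_self_pow₀ h1u (by norm_num)
    simp only [zero_mul, Real.exp_zero, one_mul]
    rw [norm_mul, Real.norm_eq_abs, Real.norm_eq_abs, abs_of_pos hge]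
    calc |⟪gradient f (x + t • h + μ • u), h⟫| * rexp (-‖u‖ ^ 2 / 2)
        ≤ (‖gradient f (x + t • h + μ • u)‖ * ‖h‖) * rexp (-‖u‖ ^ 2 / 2) := by
          apply mul_le_mul_of_nonneg_right (abs_real_inner_le_norm _ _) hge.le
      _ ≤ ((CG * (1 + ‖u‖)) * ‖h‖) * rexp (-‖u‖ ^ 2 / 2) := by
          apply mul_le_mul_of_nonneg_right _ hge.le
          apply mul_le_mul_of_nonneg_right _ (norm_nonneg h)
          rw [hCG]; exact hgp
      _ ≤ ((CG * (1 + ‖u‖) ^ 3) * ‖h‖) * rexp (-‖u‖ ^ 2 / 2) := by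
          apply mul_le_mul_of_nonneg_right _ hge.le
          apply mul_le_mul_of_nonneg_right _ (norm_nonneg h)
          exact mul_le_mul_of_nonneg_left hpow hCG0
      _ = CG * ‖h‖ * ((1 + ‖u‖) ^ 3 * rexp (-‖u‖ ^ 2 / 2)) := by ring
  · -- bound integrable
    have := SmoothedAux.integrable_master (n := n) (CG * ‖h‖) 0 3
    exact this
  · -- differentiability
    refine Filter.Eventually.of_forall (fun u => fun t _ => ?_)
    have hline : HasDerivAt (fun t : ℝ => x + t • h + μ • u) h t := by
      have h1 : HasDerivAt (fun t : ℝ => t • h) ((1:ℝ) • h) t :=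
        (hasDerivAt_id t).smul_const h
      rw [one_smul] at h1
      exact (h1.const_add x).add_const (μ • u)
    have hcomp := (hdiff (x + t • h + μ • u)).hasFDerivAt.comp_hasDerivAt t hline
    have heq : fderiv ℝ f (x + t • h + μ • u) h =
        ⟪gradient f (x + t • h + μ • u), h⟫ :=
      SmoothedAux2.fderiv_eq_inner_gradient f _ h (hdiff _)
    have hc2 : HasDerivAt (fun t : ℝ => f (x + t • h + μ • u))
        (⟪gradient f (x + t • h + μ • u), h⟫) t := by
      rw [← heq]
      exact hcomp
    exact hc2.mul_const _

end SmoothedAux4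


namespace SmoothedAux5

variable {n : ℕ}

lemma phi_poly (f : EuclideanSpace ℝ (Fin n) → ℝ) (ν Lν μ : ℝ)
    (hν0 : 0 ≤ ν) (hν1 : ν ≤ 1) (hL : 0 ≤ Lν) (hμ : 0 < μ)
    (hdiff : Differentiable ℝ f)
    (hHolder : ∀ x y : EuclideanSpace ℝ (Fin n),
      ‖gradient f y - gradient f x‖ ≤ Lν * ‖y - x‖ ^ ν)
    (x u : EuclideanSpace ℝ (Fin n)) :
    |(f (x + μ • u) - f x) / μ| ≤
      (‖gradient f x‖ + Lν * (1 + μ * ‖u‖)) * ‖u‖ := by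
  have hgrow := SmoothedAux2.f_growth f ν Lν hν0 hL hdiff hHolder (x + μ • u) x
  have hs : ‖(x + μ • u) - x‖ = μ * ‖u‖ := by
    have he : (x + μ • u) - x = μ • u := by abel
    rw [he, norm_smul, Real.norm_eq_abs, abs_of_pos hμ]
  rw [hs] at hgrow
  have hpow : (μ * ‖u‖) ^ ν ≤ 1 + μ * ‖u‖ :=
    SmoothedAux3.rpow_le_one_add _ ν (by positivity) hν0 hν1
  rw [abs_div, abs_of_pos hμ, div_le_iff₀ hμ]
  have hgx : (0:ℝ) ≤ ‖gradient f x‖ := norm_nonneg _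
  have hu : (0:ℝ) ≤ ‖u‖ := norm_nonneg u
  calc |f (x + μ • u) - f x|
      ≤ (‖gradient f x‖ + Lν * (μ * ‖u‖) ^ ν) * (μ * ‖u‖) := hgrow
    _ ≤ (‖gradient f x‖ + Lν * (1 + μ * ‖u‖)) * (μ * ‖u‖) := by
        have := mul_le_mul_of_nonneg_left hpow hL
        nlinarith [mul_nonneg hμ.le hu]
    _ = (‖gradient f x‖ + Lν * (1 + μ * ‖u‖)) * ‖u‖ * μ := by ring

lemma exp_shift (v h : EuclideanSpace ℝ (Fin n)) (t : ℝ) (ht : |t| ≤ 1) :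
    rexp (-‖v - t • h‖ ^ 2 / 2) ≤ rexp (‖h‖ * ‖v‖) * rexp (-‖v‖ ^ 2 / 2) := by
  rw [← Real.exp_add]
  apply Real.exp_le_exp.2
  have hexp : ‖v - t • h‖ ^ 2 = ‖v‖ ^ 2 - 2 * (t * ⟪v, h⟫) + t ^ 2 * ‖h‖ ^ 2 := by
    rw [norm_sub_sq_real, real_inner_smul_right, norm_smul, Real.norm_eq_abs, mul_pow, sq_abs]
  have hcs := abs_real_inner_le_norm v h
  have habs : |t * ⟪v, h⟫| ≤ ‖v‖ * ‖h‖ := by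
    rw [abs_mul]
    calc |t| * |⟪v, h⟫| ≤ 1 * (‖v‖ * ‖h‖) :=
          mul_le_mul ht hcs (abs_nonneg _) zero_le_one
      _ = ‖v‖ * ‖h‖ := one_mul _
  have h1 : -(‖v‖ * ‖h‖) ≤ t * ⟪v, h⟫ := neg_le_of_abs_le habs
  have h2 : t * ⟪v, h⟫ ≤ ‖v‖ * ‖h‖ := le_trans (le_abs_self _) habs
  nlinarith [mul_nonneg (sq_nonneg t) (sq_nonneg ‖h‖)]

lemma integrable_gauss : Integrable (fun u : EuclideanSpace ℝ (Fin n) =>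
    rexp (-‖u‖ ^ 2 / 2)) := by
  apply SmoothedAux.integrable_of_le_master
    (SmoothedAux4.gauss_cont.aestronglyMeasurable) 1 0 0
  intro u
  simp only [pow_zero, zero_mul, Real.exp_zero, one_mul, Real.norm_eq_abs]
  rw [abs_of_pos (Real.exp_pos _)]

lemma integral_gauss_eq : (∫ u : EuclideanSpace ℝ (Fin n), rexp (-‖u‖ ^ 2 / 2)) =
    (2 * π) ^ ((n : ℝ) / 2) := by
  have h := GaussianFourier.integral_rexp_neg_mul_sq_norm
    (V := EuclideanSpace ℝ (Fin n)) (b := 1/2) (by norm_num)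
  rw [finrank_euclideanSpace_fin] at h
  have heq : (∫ u : EuclideanSpace ℝ (Fin n), rexp (-‖u‖ ^ 2 / 2)) =
      ∫ u : EuclideanSpace ℝ (Fin n), rexp (-(1/2) * ‖u‖ ^ 2) := by
    congr 1; funext u; congr 1; ring
  rw [heq, h, show (π / (1/2:ℝ)) = 2 * π by ring]

lemma cont_gauss_shift (h : EuclideanSpace ℝ (Fin n)) (t : ℝ) :
    Continuous fun v : EuclideanSpace ℝ (Fin n) => rexp (-‖v - t • h‖ ^ 2 / 2) :=
  Real.continuous_exp.comp
    (Continuous.div_const ((((continuous_id.sub continuous_const).norm).pow 2).neg) 2)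

/-- Stein's identity / Gaussian integration by parts. -/
lemma stein (f : EuclideanSpace ℝ (Fin n) → ℝ) (ν Lν μ : ℝ)
    (hν0 : 0 ≤ ν) (hν1 : ν ≤ 1) (hL : 0 ≤ Lν) (hμ : 0 < μ)
    (hdiff : Differentiable ℝ f)
    (hHolder : ∀ x y : EuclideanSpace ℝ (Fin n),
      ‖gradient f y - gradient f x‖ ≤ Lν * ‖y - x‖ ^ ν)
    (x h : EuclideanSpace ℝ (Fin n)) :
    ∫ u : EuclideanSpace ℝ (Fin n),
        ((f (x + μ • u) - f x) / μ) * rexp (-‖u‖ ^ 2 / 2) * ⟪u, h⟫ =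
      ∫ u : EuclideanSpace ℝ (Fin n),
        ⟪gradient f (x + μ • u), h⟫ * rexp (-‖u‖ ^ 2 / 2) := by
  classical
  set φ : EuclideanSpace ℝ (Fin n) → ℝ := fun v => (f (x + μ • v) - f x) / μ with hφdef
  set A : ℝ := ‖gradient f x‖ + Lν * (1 + μ) with hAdef
  have hgx : (0:ℝ) ≤ ‖gradient f x‖ := norm_nonneg _
  have hA0 : 0 ≤ A := by rw [hAdef]; nlinarith
  have hφcont : Continuous φ := by
    apply Continuous.div_const
    apply Continuous.sub _ continuous_const
    exact hdiff.continuous.comp (SmoothedAux4.affine_cont x μ)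
  have hφb : ∀ v : EuclideanSpace ℝ (Fin n), |φ v| ≤ A * (1 + ‖v‖) ^ 2 := by
    intro v
    have h1 := phi_poly f ν Lν μ hν0 hν1 hL hμ hdiff hHolder x v
    have hu : (0:ℝ) ≤ ‖v‖ := norm_nonneg v
    rw [hφdef, hAdef]
    calc |(f (x + μ • v) - f x) / μ| ≤ (‖gradient f x‖ + Lν * (1 + μ * ‖v‖)) * ‖v‖ := h1
      _ ≤ (‖gradient f x‖ + Lν * (1 + μ)) * (1 + ‖v‖) ^ 2 := by
          nlinarith [mul_nonneg hL hu, mul_nonneg (mul_nonneg hL hμ.le) hu,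
            mul_nonneg hgx hu, sq_nonneg ‖v‖,
            mul_nonneg (mul_nonneg hL hμ.le) (mul_nonneg hu hu),
            mul_nonneg hL (mul_nonneg hu hu),
            mul_nonneg hgx (mul_nonneg hu hu)]
  have hηder := fun s => SmoothedAux4.eta_hasDerivAt f ν Lν μ hν0 hν1 hL hμ hdiff hHolder x h s
  have hint_f : ∀ s : ℝ, Integrable (fun u : EuclideanSpace ℝ (Fin n) =>
      f (x + s • h + μ • u) * rexp (-‖u‖ ^ 2 / 2)) := by
    intro s
    have hw : ‖s • h‖ ≤ |s| * ‖h‖ := by rw [norm_smul, Real.norm_eq_abs]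
    have hCnn : (0:ℝ) ≤ |f x| +
        (‖gradient f x‖ + Lν * (1 + |s| * ‖h‖ + μ)) * (|s| * ‖h‖ + μ) := by
      have h1 : (0:ℝ) ≤ |s| * ‖h‖ := by positivity
      nlinarith [abs_nonneg (f x), mul_nonneg hL (by nlinarith : (0:ℝ) ≤ 1 + |s| * ‖h‖ + μ)]
    apply SmoothedAux.integrable_of_le_master
      (((hdiff.continuous.comp (SmoothedAux4.affine_cont (x + s • h) μ)).mul
        SmoothedAux4.gauss_cont).aestronglyMeasurable)
      (|f x| + (‖gradient f x‖ + Lν * (1 + |s| * ‖h‖ + μ)) * (|s| * ‖h‖ + μ)) 0 3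
    intro u
    have hfp := SmoothedAux3.f_poly f ν Lν μ hν0 hν1 hL hμ hdiff hHolder x (|s| * ‖h‖)
      (by positivity) (s • h) u hw
    have hge : (0:ℝ) < rexp (-‖u‖ ^ 2 / 2) := Real.exp_pos _
    have h1u : (1:ℝ) ≤ 1 + ‖u‖ := by linarith [norm_nonneg u]
    have hpow : (1 + ‖u‖) ^ 2 ≤ (1 + ‖u‖) ^ 3 := pow_le_pow_right₀ h1u (by norm_num)
    simp only [zero_mul, Real.exp_zero, one_mul, Pi.mul_apply, Function.comp_apply]
    rw [norm_mul, Real.norm_eq_abs, Real.norm_eq_abs, abs_of_pos hge]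
    calc |f (x + s • h + μ • u)| * rexp (-‖u‖ ^ 2 / 2)
        ≤ ((|f x| + (‖gradient f x‖ + Lν * (1 + |s| * ‖h‖ + μ)) * (|s| * ‖h‖ + μ)) *
            (1 + ‖u‖) ^ 2) * rexp (-‖u‖ ^ 2 / 2) :=
          mul_le_mul_of_nonneg_right hfp hge.le
      _ ≤ ((|f x| + (‖gradient f x‖ + Lν * (1 + |s| * ‖h‖ + μ)) * (|s| * ‖h‖ + μ)) *
            (1 + ‖u‖) ^ 3) * rexp (-‖u‖ ^ 2 / 2) := by
          apply mul_le_mul_of_nonneg_right _ hge.le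
          exact mul_le_mul_of_nonneg_left hpow hCnn
      _ = _ := by ring
  -- Φ = Ψ
  have hΦΨ : (fun t : ℝ =>
      ((∫ u : EuclideanSpace ℝ (Fin n), f (x + (t * μ) • h + μ • u) * rexp (-‖u‖ ^ 2 / 2)) -
        f x * ∫ u : EuclideanSpace ℝ (Fin n), rexp (-‖u‖ ^ 2 / 2)) / μ) =
      fun t : ℝ => ∫ v : EuclideanSpace ℝ (Fin n), φ v * rexp (-‖v - t • h‖ ^ 2 / 2) := by
    funext t
    have step1 : (∫ v : EuclideanSpace ℝ (Fin n), φ v * rexp (-‖v - t • h‖ ^ 2 / 2)) =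
        ∫ u : EuclideanSpace ℝ (Fin n), φ (u + t • h) * rexp (-‖u‖ ^ 2 / 2) := by
      rw [← MeasureTheory.integral_add_right_eq_self
        (fun v : EuclideanSpace ℝ (Fin n) => φ v * rexp (-‖v - t • h‖ ^ 2 / 2)) (t • h)]
      simp only [add_sub_cancel_right]
    have step2 : (fun u : EuclideanSpace ℝ (Fin n) => φ (u + t • h) * rexp (-‖u‖ ^ 2 / 2)) =
        fun u : EuclideanSpace ℝ (Fin n) =>
          (f (x + (t * μ) • h + μ • u) * rexp (-‖u‖ ^ 2 / 2)) / μ -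
          (f x / μ) * rexp (-‖u‖ ^ 2 / 2) := by
      funext u
      have hv : x + μ • (u + t • h) = x + (t * μ) • h + μ • u := by
        rw [smul_add, smul_smul, mul_comm μ t]
        abel
      show (f (x + μ • (u + t • h)) - f x) / μ * rexp (-‖u‖ ^ 2 / 2) = _
      rw [hv]
      ring
    rw [step1, step2]
    rw [integral_sub ((hint_f (t * μ)).div_const μ)
      (Integrable.const_mul integrable_gauss (f x / μ))]
    rw [MeasureTheory.integral_div, MeasureTheory.integral_const_mul]
    ring
  -- derivative of Φ at 0
  have hΦder : HasDerivAt (fun t : ℝ =>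
      ((∫ u : EuclideanSpace ℝ (Fin n), f (x + (t * μ) • h + μ • u) * rexp (-‖u‖ ^ 2 / 2)) -
        f x * ∫ u : EuclideanSpace ℝ (Fin n), rexp (-‖u‖ ^ 2 / 2)) / μ)
      (∫ u : EuclideanSpace ℝ (Fin n),
        ⟪gradient f (x + (0:ℝ) • h + μ • u), h⟫ * rexp (-‖u‖ ^ 2 / 2)) 0 := by
    have hmul : HasDerivAt (fun t : ℝ => t * μ) μ 0 := by
      simpa using (hasDerivAt_id (0:ℝ)).mul_const μ
    have hcomp := ((hηder ((0:ℝ) * μ)).2).comp 0 hmul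
    rw [zero_mul] at hcomp
    have h2 := (hcomp.sub_const
      (f x * ∫ u : EuclideanSpace ℝ (Fin n), rexp (-‖u‖ ^ 2 / 2))).div_const μ
    rw [mul_div_cancel_right₀ _ hμ.ne'] at h2
    exact h2
  -- derivative of Ψ at 0 by dominated convergence
  have hΨder : HasDerivAt (fun t : ℝ =>
      ∫ v : EuclideanSpace ℝ (Fin n), φ v * rexp (-‖v - t • h‖ ^ 2 / 2))
      (∫ v : EuclideanSpace ℝ (Fin n),
        φ v * (rexp (-‖v - (0:ℝ) • h‖ ^ 2 / 2) * ⟪v - (0:ℝ) • h, h⟫)) 0 := by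
    have key := hasDerivAt_integral_of_dominated_loc_of_deriv_le
      (μ := (volume : Measure (EuclideanSpace ℝ (Fin n)))) (x₀ := (0:ℝ))
      (F := fun t v => φ v * rexp (-‖v - t • h‖ ^ 2 / 2))
      (F' := fun t v => φ v * (rexp (-‖v - t • h‖ ^ 2 / 2) * ⟪v - t • h, h⟫))
      (bound := fun v => (A * ((1 + ‖h‖) * ‖h‖)) *
        ((1 + ‖v‖) ^ 3 * (rexp (‖h‖ * ‖v‖) * rexp (-‖v‖ ^ 2 / 2))))
      (s := Metric.ball (0:ℝ) 1) (Metric.ball_mem_nhds (0:ℝ) one_pos) ?_ ?_ ?_ ?_ ?_ ?_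
    · exact key.2
    · refine Filter.Eventually.of_forall (fun t => ?_)
      exact (hφcont.mul (cont_gauss_shift h t)).aestronglyMeasurable
    · -- integrability of F 0
      apply SmoothedAux.integrable_of_le_master
        ((hφcont.mul (cont_gauss_shift h 0)).aestronglyMeasurable) A 0 3
      intro v
      have h1u : (1:ℝ) ≤ 1 + ‖v‖ := by linarith [norm_nonneg v]
      have hpow : (1 + ‖v‖) ^ 2 ≤ (1 + ‖v‖) ^ 3 := pow_le_pow_right₀ h1u (by norm_num)
      simp only [zero_smul, sub_zero, zero_mul, Real.exp_zero, one_mul, Pi.mul_apply]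
      rw [norm_mul, Real.norm_eq_abs, Real.norm_eq_abs,
        abs_of_pos (Real.exp_pos (-‖v‖ ^ 2 / 2))]
      calc |φ v| * rexp (-‖v‖ ^ 2 / 2)
          ≤ (A * (1 + ‖v‖) ^ 2) * rexp (-‖v‖ ^ 2 / 2) :=
            mul_le_mul_of_nonneg_right (hφb v) (Real.exp_pos _).le
        _ ≤ (A * (1 + ‖v‖) ^ 3) * rexp (-‖v‖ ^ 2 / 2) := by
            apply mul_le_mul_of_nonneg_right _ (Real.exp_pos _).le
            exact mul_le_mul_of_nonneg_left hpow hA0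
        _ = A * ((1 + ‖v‖) ^ 3 * rexp (-‖v‖ ^ 2 / 2)) := by ring
    · -- measurability of F' 0
      apply Continuous.aestronglyMeasurable
      apply hφcont.mul
      exact (cont_gauss_shift h 0).mul
        ((continuous_id.sub continuous_const).inner continuous_const)
    · -- bound
      refine Filter.Eventually.of_forall (fun v => fun t ht => ?_)
      have htabs : |t| ≤ 1 := by
        have := Metric.mem_ball.1 ht
        rw [Real.dist_eq, sub_zero] at this
        linarith
      have hexps := exp_shift v h t htabs
      have hinner : |⟪v - t • h, h⟫| ≤ (‖v‖ + ‖h‖) * ‖h‖ := by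
        calc |⟪v - t • h, h⟫| ≤ ‖v - t • h‖ * ‖h‖ := abs_real_inner_le_norm _ _
          _ ≤ (‖v‖ + ‖h‖) * ‖h‖ := by
              apply mul_le_mul_of_nonneg_right _ (norm_nonneg h)
              calc ‖v - t • h‖ ≤ ‖v‖ + ‖t • h‖ := norm_sub_le _ _
                _ ≤ ‖v‖ + ‖h‖ := by
                    rw [norm_smul, Real.norm_eq_abs]
                    have : |t| * ‖h‖ ≤ 1 * ‖h‖ :=
                      mul_le_mul_of_nonneg_right htabs (norm_nonneg h)
                    linarith
      have hge : (0:ℝ) < rexp (-‖v - t • h‖ ^ 2 / 2) := Real.exp_pos _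
      have hr : (0:ℝ) ≤ ‖v‖ := norm_nonneg v
      have hH : (0:ℝ) ≤ ‖h‖ := norm_nonneg h
      rw [norm_mul, Real.norm_eq_abs, Real.norm_eq_abs, abs_mul, abs_of_pos hge]
      calc |φ v| * (rexp (-‖v - t • h‖ ^ 2 / 2) * |⟪v - t • h, h⟫|)
          ≤ (A * (1 + ‖v‖) ^ 2) *
              ((rexp (‖h‖ * ‖v‖) * rexp (-‖v‖ ^ 2 / 2)) * ((‖v‖ + ‖h‖) * ‖h‖)) := by
            apply mul_le_mul (hφb v) _ (by positivity) (by positivity)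
            apply mul_le_mul hexps hinner (abs_nonneg _) (by positivity)
        _ ≤ (A * ((1 + ‖h‖) * ‖h‖)) *
              ((1 + ‖v‖) ^ 3 * (rexp (‖h‖ * ‖v‖) * rexp (-‖v‖ ^ 2 / 2))) := by
            have hpoly : (A * (1 + ‖v‖) ^ 2) * ((‖v‖ + ‖h‖) * ‖h‖) ≤
                (A * ((1 + ‖h‖) * ‖h‖)) * (1 + ‖v‖) ^ 3 := by
              nlinarith [mul_nonneg (mul_nonneg (mul_nonneg hA0 hH) (sq_nonneg (1 + ‖v‖)))
                (mul_nonneg hH hr), mul_nonneg (mul_nonneg hA0 hH) (sq_nonneg (1 + ‖v‖))]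
            calc (A * (1 + ‖v‖) ^ 2) *
                ((rexp (‖h‖ * ‖v‖) * rexp (-‖v‖ ^ 2 / 2)) * ((‖v‖ + ‖h‖) * ‖h‖))
                = ((A * (1 + ‖v‖) ^ 2) * ((‖v‖ + ‖h‖) * ‖h‖)) *
                  (rexp (‖h‖ * ‖v‖) * rexp (-‖v‖ ^ 2 / 2)) := by ring
              _ ≤ ((A * ((1 + ‖h‖) * ‖h‖)) * (1 + ‖v‖) ^ 3) *
                  (rexp (‖h‖ * ‖v‖) * rexp (-‖v‖ ^ 2 / 2)) := by
                  apply mul_le_mul_of_nonneg_right hpoly (by positivity)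
              _ = _ := by ring
    · exact SmoothedAux.integrable_master (A * ((1 + ‖h‖) * ‖h‖)) ‖h‖ 3
    · -- differentiability in t
      refine Filter.Eventually.of_forall (fun v => fun t _ => ?_)
      have hq : HasDerivAt (fun t : ℝ => -‖v - t • h‖ ^ 2 / 2) (⟪v - t • h, h⟫) t := by
        have hfun : (fun t : ℝ => -‖v - t • h‖ ^ 2 / 2) =
            fun t : ℝ => -(‖v‖ ^ 2 - 2 * (t * ⟪v, h⟫) + t ^ 2 * ‖h‖ ^ 2) / 2 := by
          funext s
          rw [norm_sub_sq_real, real_inner_smul_right, norm_smul, Real.norm_eq_abs,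
            mul_pow, sq_abs]
        rw [hfun]
        have h1 : HasDerivAt (fun t : ℝ => t * ⟪v, h⟫) ⟪v, h⟫ t := hasDerivAt_mul_const _
        have h2 : HasDerivAt (fun t : ℝ => t ^ 2 * ‖h‖ ^ 2) (2 * t * ‖h‖ ^ 2) t := by
          have := (hasDerivAt_pow 2 t).mul_const (‖h‖ ^ 2)
          simpa using this
        have h3 := (((hasDerivAt_const t (‖v‖ ^ 2)).sub (h1.const_mul 2)).add h2).neg.div_const 2
        refine h3.congr_deriv ?_
        rw [inner_sub_left, real_inner_smul_left, real_inner_self_eq_norm_sq]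
        ring
      exact (hq.exp.const_mul (φ v))
  -- combine
  have huniq : (∫ u : EuclideanSpace ℝ (Fin n),
      ⟪gradient f (x + (0:ℝ) • h + μ • u), h⟫ * rexp (-‖u‖ ^ 2 / 2)) =
      ∫ v : EuclideanSpace ℝ (Fin n),
        φ v * (rexp (-‖v - (0:ℝ) • h‖ ^ 2 / 2) * ⟪v - (0:ℝ) • h, h⟫) :=
    (hΦΨ ▸ hΦder).unique hΨder
  simp only [zero_smul, add_zero, sub_zero] at huniq
  rw [huniq]
  congr 1
  funext u
  show (f (x + μ • u) - f x) / μ * rexp (-‖u‖ ^ 2 / 2) * ⟪u, h⟫ = _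
  show _ = (f (x + μ • u) - f x) / μ * (rexp (-‖u‖ ^ 2 / 2) * ⟪u, h⟫)
  ring

end SmoothedAux5


namespace SmoothedAux6

/-- Young/AM-GM splitting: `a^{1+ν} ≤ (1/d)^{(1-ν)/(1+ν)} a²/m^{1-ν} + d m^{1+ν}`. -/
lemma young_split (ν d m a : ℝ) (hν0 : 0 ≤ ν) (hν1 : ν ≤ 1) (hd : 0 < d) (hm : 0 < m)
    (ha : 0 ≤ a) :
    a ^ ν * a ≤ (1 / d) ^ ((1 - ν) / (1 + ν)) * a ^ 2 / m ^ (1 - ν) + d * m ^ (1 + ν) := by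
  have hν1' : (0:ℝ) < 1 + ν := by linarith
  rcases eq_or_lt_of_le ha with rfl | hapos
  · rw [mul_zero]
    have h1 : (0:ℝ) ≤ (1 / d) ^ ((1 - ν) / (1 + ν)) * (0:ℝ) ^ 2 / m ^ (1 - ν) := by
      positivity
    have h2 : (0:ℝ) ≤ d * m ^ (1 + ν) := by positivity
    linarith
  set w1 : ℝ := (1 + ν) / 2 with hw1
  set w2 : ℝ := (1 - ν) / 2 with hw2
  set p1 : ℝ := (1 / d) ^ ((1 - ν) / (1 + ν)) * a ^ 2 / m ^ (1 - ν) with hp1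
  set p2 : ℝ := d * m ^ (1 + ν) with hp2
  have hp1pos : 0 < p1 := by rw [hp1]; positivity
  have hp2pos : 0 < p2 := by rw [hp2]; positivity
  have hw10 : 0 ≤ w1 := by rw [hw1]; linarith
  have hw20 : 0 ≤ w2 := by rw [hw2]; linarith
  have hsum : w1 + w2 = 1 := by rw [hw1, hw2]; ring
  have hgm := Real.geom_mean_le_arith_mean2_weighted hw10 hw20 hp1pos.le hp2pos.le hsum
  have key : p1 ^ w1 * p2 ^ w2 = a ^ ν * a := by
    have hlog1 : Real.log p1 = (1 - ν) / (1 + ν) * (-Real.log d) + 2 * Real.log a -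
        (1 - ν) * Real.log m := by
      rw [hp1, Real.log_div (by positivity) (by positivity),
        Real.log_mul (by positivity) (by positivity),
        Real.log_rpow (by positivity), Real.log_rpow hm, Real.log_pow, one_div,
        Real.log_inv]
      push_cast
      ring
    have hlog2 : Real.log p2 = Real.log d + (1 + ν) * Real.log m := by
      rw [hp2, Real.log_mul (by positivity) (by positivity), Real.log_rpow hm]
    rw [Real.rpow_def_of_pos hp1pos, Real.rpow_def_of_pos hp2pos, ← Real.exp_add]
    have ha2 : a ^ ν * a = a ^ (ν + 1) := by
      rw [Real.rpow_add hapos, Real.rpow_one]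
    rw [ha2, Real.rpow_def_of_pos hapos]
    congr 1
    rw [hlog1, hlog2, hw1, hw2]
    field_simp
    ring
  calc a ^ ν * a = p1 ^ w1 * p2 ^ w2 := key.symm
    _ ≤ w1 * p1 + w2 * p2 := hgm
    _ ≤ p1 + p2 := by
        have hw11 : w1 ≤ 1 := by rw [hw1]; linarith
        have hw21 : w2 ≤ 1 := by rw [hw2]; linarith
        nlinarith [hp1pos.le, hp2pos.le]

end SmoothedAux6



noncomputable def kappa (n : ℕ) : ℝ := (2 * Real.pi) ^ ((n : ℝ) / 2)

/-- Gaussian smoothing `f_μ` of `f`. -/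
noncomputable def gsmooth {n : ℕ} (f : EuclideanSpace ℝ (Fin n) → ℝ) (μ : ℝ)
    (x : EuclideanSpace ℝ (Fin n)) : ℝ :=
  (kappa n)⁻¹ * ∫ u : EuclideanSpace ℝ (Fin n), f (x + μ • u) * Real.exp (-‖u‖ ^ 2 / 2)

/-- The gradient of the Gaussian smoothing, written via finite differences:
`∇f_μ(x) = κ⁻¹ ∫ ((f(x+μu) - f(x))/μ) u e^{-‖u‖²/2} du`. Applied to an inexact
oracle `f̃` it gives the smoothed inexact gradient `∇f̃_μ(x, δ)`. -/
noncomputable def gsmoothGrad {n : ℕ} (f : EuclideanSpace ℝ (Fin n) → ℝ) (μ : ℝ)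
    (x : EuclideanSpace ℝ (Fin n)) : EuclideanSpace ℝ (Fin n) :=
  (kappa n)⁻¹ • ∫ u : EuclideanSpace ℝ (Fin n),
    (((f (x + μ • u) - f x) / μ) * Real.exp (-‖u‖ ^ 2 / 2)) • u

set_option maxHeartbeats 1600000 in
/-- Lemma 2.2, second choice of constants: for any `δ̂ > 0`,
`|f_μ(y) − f_μ(x) − ⟨∇f_μ(x), y−x⟩| ≤
  (1/δ̂)^{(1−ν)/(1+ν)} (L_ν/μ^{1−ν}) ‖y−x‖² + δ̂ L_ν μ^{1+ν}`. -/
theorem smoothed_quadratic_upper_bound_with_slack {n : ℕ} (hn : 1 ≤ n)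
    (f : EuclideanSpace ℝ (Fin n) → ℝ) (ν Lν μ dhat : ℝ)
    (hν0 : 0 ≤ ν) (hν1 : ν ≤ 1) (hL : 0 ≤ Lν)
    (hdiff : Differentiable ℝ f)
    (hHolder : ∀ x y : EuclideanSpace ℝ (Fin n),
      ‖gradient f y - gradient f x‖ ≤ Lν * ‖y - x‖ ^ ν)
    (hμ : 0 < μ) (hdhat : 0 < dhat) (x y : EuclideanSpace ℝ (Fin n)) :
    |gsmooth f μ y - gsmooth f μ x - ⟪gsmoothGrad f μ x, y - x⟫| ≤
      (1 / dhat) ^ ((1 - ν) / (1 + ν)) * (Lν / μ ^ (1 - ν)) * ‖y - x‖ ^ 2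
        + dhat * Lν * μ ^ (1 + ν) := by
  have hRHS0 : 0 ≤ (1 / dhat) ^ ((1 - ν) / (1 + ν)) * (Lν / μ ^ (1 - ν)) * ‖y - x‖ ^ 2
      + dhat * Lν * μ ^ (1 + ν) := by
    apply add_nonneg
    · apply mul_nonneg (mul_nonneg (Real.rpow_nonneg (by positivity) _)
        (div_nonneg hL (Real.rpow_nonneg hμ.le _))) (sq_nonneg _)
    · exact mul_nonneg (mul_nonneg hdhat.le hL) (Real.rpow_nonneg hμ.le _)
  by_cases hxy : y = x
  · subst hxy
    simpa using hRHS0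
  -- setup
  set hv : EuclideanSpace ℝ (Fin n) := y - x with hhv
  have hκ : 0 < kappa n := Real.rpow_pos_of_pos (by positivity) _
  have hκi : 0 < (kappa n)⁻¹ := inv_pos.2 hκ
  have hgx : (0:ℝ) ≤ ‖gradient f x‖ := norm_nonneg _
  have hηd := fun s => SmoothedAux4.eta_hasDerivAt f ν Lν μ hν0 hν1 hL hμ hdiff hHolder x hv s
  set ηf : ℝ → ℝ := fun t => ∫ u : EuclideanSpace ℝ (Fin n),
    f (x + t • hv + μ • u) * rexp (-‖u‖ ^ 2 / 2) with hηfdef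
  set D : ℝ → ℝ := fun s => ∫ u : EuclideanSpace ℝ (Fin n),
    ⟪gradient f (x + s • hv + μ • u), hv⟫ * rexp (-‖u‖ ^ 2 / 2) with hDdef
  have hDer : ∀ s : ℝ, HasDerivAt ηf (D s) s := fun s => (hηd s).2
  have hDint : ∀ s : ℝ, Integrable (fun u : EuclideanSpace ℝ (Fin n) =>
      ⟪gradient f (x + s • hv + μ • u), hv⟫ * rexp (-‖u‖ ^ 2 / 2)) := fun s => (hηd s).1
  -- (a) rewrite the three main quantities
  have hgy : gsmooth f μ y = (kappa n)⁻¹ * ηf 1 := by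
    rw [gsmooth, hηfdef]
    congr 1
    congr 1
    funext u
    congr 2
    rw [one_smul, hhv]
    abel
  have hgx2 : gsmooth f μ x = (kappa n)⁻¹ * ηf 0 := by
    rw [gsmooth, hηfdef]
    congr 1
    congr 1
    funext u
    congr 2
    rw [zero_smul, add_zero]
  -- (b) the inner product term via Stein's identity
  have hφb : ∀ v : EuclideanSpace ℝ (Fin n), |(f (x + μ • v) - f x) / μ| ≤
      (‖gradient f x‖ + Lν * (1 + μ)) * (1 + ‖v‖) ^ 2 := by
    intro v
    have h1 := SmoothedAux5.phi_poly f ν Lν μ hν0 hν1 hL hμ hdiff hHolder x v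
    have hu : (0:ℝ) ≤ ‖v‖ := norm_nonneg v
    calc |(f (x + μ • v) - f x) / μ| ≤ (‖gradient f x‖ + Lν * (1 + μ * ‖v‖)) * ‖v‖ := h1
      _ ≤ (‖gradient f x‖ + Lν * (1 + μ)) * (1 + ‖v‖) ^ 2 := by
          nlinarith [mul_nonneg hL hu, mul_nonneg (mul_nonneg hL hμ.le) hu,
            mul_nonneg hgx hu, sq_nonneg ‖v‖,
            mul_nonneg (mul_nonneg hL hμ.le) (mul_nonneg hu hu),
            mul_nonneg hL (mul_nonneg hu hu),
            mul_nonneg hgx (mul_nonneg hu hu)]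
  have hA0 : (0:ℝ) ≤ ‖gradient f x‖ + Lν * (1 + μ) := by nlinarith
  have hIvecMeas : AEStronglyMeasurable (fun u : EuclideanSpace ℝ (Fin n) =>
      (((f (x + μ • u) - f x) / μ) * rexp (-‖u‖ ^ 2 / 2)) • u) volume := by
    apply Continuous.aestronglyMeasurable
    apply Continuous.fun_smul _ continuous_id
    apply Continuous.fun_mul _ SmoothedAux4.gauss_cont
    apply Continuous.div_const
    apply Continuous.sub _ continuous_const
    exact hdiff.continuous.comp (SmoothedAux4.affine_cont x μ)
  have hIvec : Integrable (fun u : EuclideanSpace ℝ (Fin n) =>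
      (((f (x + μ • u) - f x) / μ) * rexp (-‖u‖ ^ 2 / 2)) • u) := by
    apply SmoothedAux.integrable_of_le_master hIvecMeas (‖gradient f x‖ + Lν * (1 + μ)) 0 3
    intro u
    have hge : (0:ℝ) < rexp (-‖u‖ ^ 2 / 2) := Real.exp_pos _
    have hu : (0:ℝ) ≤ ‖u‖ := norm_nonneg u
    have h1u : (1:ℝ) ≤ 1 + ‖u‖ := by linarith
    rw [norm_smul, norm_mul, Real.norm_eq_abs, Real.norm_eq_abs, abs_of_pos hge]
    simp only [zero_mul, Real.exp_zero, one_mul]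
    calc |(f (x + μ • u) - f x) / μ| * rexp (-‖u‖ ^ 2 / 2) * ‖u‖
        ≤ ((‖gradient f x‖ + Lν * (1 + μ)) * (1 + ‖u‖) ^ 2) * rexp (-‖u‖ ^ 2 / 2) *
            (1 + ‖u‖) := by
          apply mul_le_mul _ (by linarith) hu (by positivity)
          exact mul_le_mul_of_nonneg_right (hφb u) hge.le
      _ = (‖gradient f x‖ + Lν * (1 + μ)) * ((1 + ‖u‖) ^ 3 * rexp (-‖u‖ ^ 2 / 2)) := by
          ring
  have hinner : ⟪gsmoothGrad f μ x, hv⟫ = (kappa n)⁻¹ * D 0 := by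
    rw [gsmoothGrad, real_inner_smul_left]
    congr 1
    rw [real_inner_comm, ← integral_inner hIvec hv]
    have hstein := SmoothedAux5.stein f ν Lν μ hν0 hν1 hL hμ hdiff hHolder x hv
    calc (∫ u : EuclideanSpace ℝ (Fin n),
          ⟪hv, (((f (x + μ • u) - f x) / μ) * rexp (-‖u‖ ^ 2 / 2)) • u⟫)
        = ∫ u : EuclideanSpace ℝ (Fin n),
            ((f (x + μ • u) - f x) / μ) * rexp (-‖u‖ ^ 2 / 2) * ⟪u, hv⟫ := by
          congr 1
          funext u
          rw [real_inner_smul_right, real_inner_comm]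
      _ = ∫ u : EuclideanSpace ℝ (Fin n),
            ⟪gradient f (x + μ • u), hv⟫ * rexp (-‖u‖ ^ 2 / 2) := hstein
      _ = D 0 := by
          rw [hDdef]
          congr 1
          funext u
          rw [zero_smul, add_zero]
  -- (c) interval integrability of D and FTC
  set CG : ℝ := ‖gradient f x‖ + Lν * (1 + ‖hv‖ + μ) with hCGdef
  have hCG0 : 0 ≤ CG := by
    rw [hCGdef]; nlinarith [norm_nonneg hv]
  have hDb : ∀ s : ℝ, |s| ≤ 1 → |D s| ≤ ∫ u : EuclideanSpace ℝ (Fin n),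
      (CG * ‖hv‖) * ((1 + ‖u‖) ^ 3 * (rexp (0 * ‖u‖) * rexp (-‖u‖ ^ 2 / 2))) := by
    intro s hs
    rw [hDdef, ← Real.norm_eq_abs]
    apply MeasureTheory.norm_integral_le_of_norm_le (SmoothedAux.integrable_master _ 0 3)
    refine Filter.Eventually.of_forall (fun u => ?_)
    have hw : ‖s • hv‖ ≤ ‖hv‖ := by
      rw [norm_smul, Real.norm_eq_abs]
      nlinarith [norm_nonneg hv, abs_nonneg s]
    have hgp := SmoothedAux3.grad_poly f ν Lν μ hν0 hν1 hL hμ hHolder x ‖hv‖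
      (norm_nonneg hv) (s • hv) u hw
    have hge : (0:ℝ) < rexp (-‖u‖ ^ 2 / 2) := Real.exp_pos _
    have h1u : (1:ℝ) ≤ 1 + ‖u‖ := by linarith [norm_nonneg u]
    have hpow : (1 + ‖u‖) ≤ (1 + ‖u‖) ^ 3 := le_self_pow₀ h1u (by norm_num)
    simp only [zero_mul, Real.exp_zero, one_mul]
    rw [norm_mul, Real.norm_eq_abs, Real.norm_eq_abs, abs_of_pos hge]
    calc |⟪gradient f (x + s • hv + μ • u), hv⟫| * rexp (-‖u‖ ^ 2 / 2)
        ≤ (‖gradient f (x + s • hv + μ • u)‖ * ‖hv‖) * rexp (-‖u‖ ^ 2 / 2) :=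
          mul_le_mul_of_nonneg_right (abs_real_inner_le_norm _ _) hge.le
      _ ≤ ((CG * (1 + ‖u‖)) * ‖hv‖) * rexp (-‖u‖ ^ 2 / 2) := by
          apply mul_le_mul_of_nonneg_right _ hge.le
          apply mul_le_mul_of_nonneg_right _ (norm_nonneg hv)
          rw [hCGdef]; exact hgp
      _ ≤ ((CG * (1 + ‖u‖) ^ 3) * ‖hv‖) * rexp (-‖u‖ ^ 2 / 2) := by
          apply mul_le_mul_of_nonneg_right _ hge.le
          apply mul_le_mul_of_nonneg_right _ (norm_nonneg hv)
          exact mul_le_mul_of_nonneg_left hpow hCG0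
      _ = CG * ‖hv‖ * ((1 + ‖u‖) ^ 3 * rexp (-‖u‖ ^ 2 / 2)) := by ring
  have hDmeas : D = deriv ηf := funext fun s => ((hDer s).deriv).symm
  have hInt : IntervalIntegrable D volume 0 1 := by
    rw [intervalIntegrable_iff]
    apply Integrable.mono' (g := fun _ => ∫ u : EuclideanSpace ℝ (Fin n),
      (CG * ‖hv‖) * ((1 + ‖u‖) ^ 3 * (rexp (0 * ‖u‖) * rexp (-‖u‖ ^ 2 / 2))))
    · exact integrableOn_const (by
        rw [Set.uIoc_of_le (zero_le_one : (0:ℝ) ≤ 1)]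
        exact measure_Ioc_lt_top.ne)
    · rw [hDmeas]
      exact (measurable_deriv ηf).aestronglyMeasurable.restrict
    · rw [ae_restrict_iff' measurableSet_uIoc]
      refine Filter.Eventually.of_forall (fun s hs => ?_)
      rw [Set.uIoc_of_le (zero_le_one : (0:ℝ) ≤ 1)] at hs
      have : |s| ≤ 1 := by
        rw [abs_le]; constructor <;> [linarith [hs.1]; exact hs.2]
      rw [Real.norm_eq_abs]
      exact hDb s this
  have hFTC : (∫ s in (0:ℝ)..1, D s) = ηf 1 - ηf 0 :=
    intervalIntegral.integral_eq_sub_of_hasDerivAt (fun s _ => hDer s) hInt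
  -- (d) the error bound
  have hI0 : (∫ u : EuclideanSpace ℝ (Fin n), rexp (-‖u‖ ^ 2 / 2)) = kappa n := by
    rw [SmoothedAux5.integral_gauss_eq, kappa]
  have hdiffbound : ∀ s ∈ Set.uIoc (0:ℝ) 1,
      ‖D s - D 0‖ ≤ Lν * ‖hv‖ ^ ν * ‖hv‖ * kappa n := by
    intro s hs
    rw [Set.uIoc_of_le (zero_le_one : (0:ℝ) ≤ 1)] at hs
    have hs1 : |s| ≤ 1 := by rw [abs_le]; constructor <;> [linarith [hs.1]; exact hs.2]
    have hsub : D s - D 0 = ∫ u : EuclideanSpace ℝ (Fin n),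
        ⟪gradient f (x + s • hv + μ • u) - gradient f (x + (0:ℝ) • hv + μ • u), hv⟫ *
          rexp (-‖u‖ ^ 2 / 2) := by
      rw [hDdef, ← integral_sub (hDint s) (hDint 0)]
      congr 1
      funext u
      rw [inner_sub_left]
      ring
    rw [hsub, ← hI0, ← MeasureTheory.integral_const_mul]
    apply MeasureTheory.norm_integral_le_of_norm_le
      (SmoothedAux5.integrable_gauss.const_mul _)
    refine Filter.Eventually.of_forall (fun u => ?_)
    have hge : (0:ℝ) < rexp (-‖u‖ ^ 2 / 2) := Real.exp_pos _
    have hH := hHolder (x + (0:ℝ) • hv + μ • u) (x + s • hv + μ • u)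
    have hba : (x + s • hv + μ • u) - (x + (0:ℝ) • hv + μ • u) = s • hv := by
      rw [zero_smul, add_zero]
      abel
    rw [hba] at hH
    have hsnorm : ‖s • hv‖ ^ ν ≤ ‖hv‖ ^ ν := by
      apply Real.rpow_le_rpow (norm_nonneg _) _ hν0
      rw [norm_smul, Real.norm_eq_abs]
      nlinarith [norm_nonneg hv, abs_nonneg s]
    rw [norm_mul, Real.norm_eq_abs, Real.norm_eq_abs, abs_of_pos hge]
    calc |⟪gradient f (x + s • hv + μ • u) - gradient f (x + (0:ℝ) • hv + μ • u), hv⟫| *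
          rexp (-‖u‖ ^ 2 / 2)
        ≤ (‖gradient f (x + s • hv + μ • u) - gradient f (x + (0:ℝ) • hv + μ • u)‖ * ‖hv‖) *
            rexp (-‖u‖ ^ 2 / 2) :=
          mul_le_mul_of_nonneg_right (abs_real_inner_le_norm _ _) hge.le
      _ ≤ ((Lν * ‖s • hv‖ ^ ν) * ‖hv‖) * rexp (-‖u‖ ^ 2 / 2) := by
          apply mul_le_mul_of_nonneg_right
            (mul_le_mul_of_nonneg_right hH (norm_nonneg hv)) hge.le
      _ ≤ ((Lν * ‖hv‖ ^ ν) * ‖hv‖) * rexp (-‖u‖ ^ 2 / 2) := by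
          apply mul_le_mul_of_nonneg_right _ hge.le
          apply mul_le_mul_of_nonneg_right _ (norm_nonneg hv)
          exact mul_le_mul_of_nonneg_left hsnorm hL
      _ = Lν * ‖hv‖ ^ ν * ‖hv‖ * rexp (-‖u‖ ^ 2 / 2) := by ring
  have herr : |ηf 1 - ηf 0 - D 0| ≤ Lν * ‖hv‖ ^ ν * ‖hv‖ * kappa n := by
    have hD0const : (∫ _ in (0:ℝ)..1, D 0) = D 0 := by
      rw [intervalIntegral.integral_const]
      simp
    have hcomb : ηf 1 - ηf 0 - D 0 = ∫ s in (0:ℝ)..1, (D s - D 0) := by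
      rw [intervalIntegral.integral_sub hInt intervalIntegrable_const, hFTC, hD0const]
    rw [hcomb, ← Real.norm_eq_abs]
    have := intervalIntegral.norm_integral_le_of_norm_le_const
      (C := Lν * ‖hv‖ ^ ν * ‖hv‖ * kappa n) (f := fun s => D s - D 0) (a := 0) (b := 1)
      hdiffbound
    simpa using this
  -- (e) conclude
  rw [hgy, hgx2, hinner]
  have hfactor : (kappa n)⁻¹ * ηf 1 - (kappa n)⁻¹ * ηf 0 - (kappa n)⁻¹ * D 0 =
      (kappa n)⁻¹ * (ηf 1 - ηf 0 - D 0) := by ring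
  rw [hfactor, abs_mul, abs_of_pos hκi]
  have hyoung := SmoothedAux6.young_split ν dhat μ ‖hv‖ hν0 hν1 hdhat hμ (norm_nonneg hv)
  calc (kappa n)⁻¹ * |ηf 1 - ηf 0 - D 0|
      ≤ (kappa n)⁻¹ * (Lν * ‖hv‖ ^ ν * ‖hv‖ * kappa n) :=
        mul_le_mul_of_nonneg_left herr hκi.le
    _ = Lν * (‖hv‖ ^ ν * ‖hv‖) := by
        field_simp
    _ ≤ Lν * ((1 / dhat) ^ ((1 - ν) / (1 + ν)) * ‖hv‖ ^ 2 / μ ^ (1 - ν) +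
          dhat * μ ^ (1 + ν)) := mul_le_mul_of_nonneg_left hyoung hL
    _ = (1 / dhat) ^ ((1 - ν) / (1 + ν)) * (Lν / μ ^ (1 - ν)) * ‖hv‖ ^ 2
        + dhat * Lν * μ ^ (1 + ν) := by ring
end

section
/- Suppose ν = 1, i.e. ∇f is L₁-Lipschitz: ‖∇f(y) − ∇f(x)‖ ≤ L₁‖y − x‖ for all x, y. Then for every μ > 0 the gradient of the Gaussian smoothing is L₁-Lipschitz as well: ‖∇f_μ(y) − ∇f_μ(x)‖ ≤ L₁‖y − x‖ for all x, y ∈ ℝⁿ. -/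
open MeasureTheory Real Filter Topology
open scoped RealInnerProductSpace

/-! ### Auxiliary lemmas -/

lemma sgl.pow_le_factorial_mul_exp (k : ℕ) {t : ℝ} (ht : 0 ≤ t) :
    t ^ k ≤ k.factorial * Real.exp t := by
  have h2 : t ^ k / k.factorial ≤ ∑ i ∈ Finset.range (k+1), t ^ i / i.factorial :=
    Finset.single_le_sum (f := fun i => t ^ i / (i.factorial : ℝ)) (fun i _ => by positivity)
      (Finset.self_mem_range_succ k)
  have hk : (0:ℝ) < k.factorial := by positivity
  rw [div_le_iff₀ hk] at h2
  calc t ^ k ≤ (∑ i ∈ Finset.range (k+1), t ^ i / i.factorial) * k.factorial := h2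
    _ ≤ Real.exp t * k.factorial := by gcongr; exact Real.sum_le_exp_of_nonneg ht (k+1)
    _ = k.factorial * Real.exp t := mul_comm _ _

/-- pointwise domination of Gaussian moments -/
lemma sgl.pow_mul_gauss_le (k : ℕ) {r : ℝ} (hr : 0 ≤ r) :
    r ^ k * Real.exp (-r ^ 2 / 2) ≤ (4 ^ k * k.factorial + 2 ^ k) * Real.exp (-r ^ 2 / 4) := by
  have key : r ^ k ≤ (4 ^ k * k.factorial + 2 ^ k) * Real.exp (r ^ 2 / 4) := by
    rcases le_total r 2 with h | h
    · have h1 : r ^ k ≤ 2 ^ k := pow_le_pow_left₀ hr h k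
      have h2 : (1:ℝ) ≤ Real.exp (r ^ 2 / 4) := Real.one_le_exp (by positivity)
      have h3 : (0:ℝ) ≤ 4 ^ k * (k.factorial : ℝ) :=
        mul_nonneg (by positivity) (by positivity)
      have h4 : (2:ℝ) ^ k ≤ (4 ^ k * k.factorial + 2 ^ k) := by nlinarith
      calc r ^ k ≤ 2 ^ k := h1
        _ = 2 ^ k * 1 := (mul_one _).symm
        _ ≤ (4 ^ k * k.factorial + 2 ^ k) * Real.exp (r ^ 2 / 4) := by
            apply mul_le_mul h4 h2 (by norm_num) (by positivity)
    · have h1 : r ^ k ≤ (r ^ 2 / 2) ^ k := by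
        apply pow_le_pow_left₀ hr; nlinarith
      have h2 : (r ^ 2 / 4) ^ k ≤ k.factorial * Real.exp (r ^ 2 / 4) :=
        sgl.pow_le_factorial_mul_exp k (by positivity)
      have h3 : (r ^ 2 / 2) ^ k = 2 ^ k * (r ^ 2 / 4) ^ k := by
        rw [← mul_pow]; ring_nf
      have h4 : (0:ℝ) < Real.exp (r^2/4) := Real.exp_pos _
      have h5 : (0:ℝ) ≤ (2:ℝ) ^ k := by positivity
      calc r ^ k ≤ 2 ^ k * (r ^ 2 / 4) ^ k := by rw [← h3]; exact h1
        _ ≤ 2 ^ k * (k.factorial * Real.exp (r ^ 2 / 4)) := by gcongr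
        _ ≤ (4 ^ k * k.factorial + 2 ^ k) * Real.exp (r ^ 2 / 4) := by
            rw [← mul_assoc]
            have : (2:ℝ) ^ k * k.factorial ≤ 4 ^ k * k.factorial + 2 ^ k := by
              have : (2:ℝ)^k ≤ 4^k := by gcongr <;> norm_num
              nlinarith [Nat.one_le_iff_ne_zero.2 k.factorial_ne_zero,
                (by exact_mod_cast Nat.one_le_iff_ne_zero.2 k.factorial_ne_zero : (1:ℝ) ≤ k.factorial)]
            nlinarith
  have e2 : Real.exp (-r ^ 2 / 2) = Real.exp (-r^2/4) * Real.exp (-r^2/4) := by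
    rw [← Real.exp_add]; ring_nf
  have e3 : Real.exp (r^2/4) * Real.exp (-r^2/4) = 1 := by
    rw [← Real.exp_add]; ring_nf; exact Real.exp_zero
  have h4 : (0:ℝ) < Real.exp (-r^2/4) := Real.exp_pos _
  calc r ^ k * Real.exp (-r ^ 2 / 2) = (r ^ k * Real.exp (-r^2/4)) * Real.exp (-r^2/4) := by
        rw [e2]; ring
    _ ≤ ((4 ^ k * k.factorial + 2 ^ k) * Real.exp (r ^ 2 / 4) * Real.exp (-r^2/4)) * Real.exp (-r^2/4) := by
        gcongr
    _ = (4 ^ k * k.factorial + 2 ^ k) * Real.exp (-r ^ 2 / 4) := by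
        rw [mul_assoc _ (Real.exp (r^2/4)), e3]; ring

/-- 1D Gaussian moments -/
lemma sgl.integrable_abs_pow_gauss (k : ℕ) :
    Integrable (fun s : ℝ => |s| ^ k * Real.exp (-s ^ 2 / 2)) := by
  have base : Integrable (fun s : ℝ => Real.exp (-(4⁻¹ : ℝ) * s ^ 2)) :=
    integrable_exp_neg_mul_sq (by norm_num)
  refine (base.const_mul ((4:ℝ) ^ k * k.factorial + 2 ^ k)).mono' ?_ ?_
  · exact ((continuous_abs.pow k).mul (by continuity)).aestronglyMeasurable
  · filter_upwards with s
    have h1 : 0 ≤ |s| := abs_nonneg s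
    have h := sgl.pow_mul_gauss_le k h1
    rw [sq_abs] at h
    rw [norm_eq_abs, abs_of_nonneg (by positivity)]
    calc |s| ^ k * Real.exp (-s ^ 2 / 2) ≤ ((4:ℝ) ^ k * k.factorial + 2 ^ k) * Real.exp (-s ^ 2 / 4) := h
      _ = ((4:ℝ) ^ k * k.factorial + 2 ^ k) * Real.exp (-(4⁻¹:ℝ) * s ^ 2) := by ring_nf

lemma sgl.integrable_gauss_quarter {n : ℕ} :
    Integrable (fun u : EuclideanSpace ℝ (Fin n) => Real.exp (-‖u‖ ^ 2 / 4)) := by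
  have hc := GaussianFourier.integrable_cexp_neg_mul_sq_norm_add
    (b := (4⁻¹ : ℂ)) (by norm_num) 0 (0 : EuclideanSpace ℝ (Fin n))
  have h2 := hc.norm
  refine h2.congr (Filter.Eventually.of_forall fun u => ?_)
  simp [Complex.norm_exp]
  norm_num
  rw [show ((‖u‖:ℂ) ^ 2).re = ‖u‖ ^ 2 by norm_cast]
  ring

/-- Gaussian moments on `EuclideanSpace` -/
lemma sgl.integrable_norm_pow_gauss {n : ℕ} (k : ℕ) :
    Integrable (fun u : EuclideanSpace ℝ (Fin n) => ‖u‖ ^ k * Real.exp (-‖u‖ ^ 2 / 2)) := by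
  refine (sgl.integrable_gauss_quarter.const_mul ((4:ℝ) ^ k * k.factorial + 2 ^ k)).mono' ?_ ?_
  · exact ((continuous_norm.pow k).mul (by continuity)).aestronglyMeasurable
  · filter_upwards with u
    rw [Real.norm_eq_abs, abs_of_nonneg (by positivity)]
    exact sgl.pow_mul_gauss_le k (norm_nonneg u)

/-- domination principle -/
lemma sgl.integrable_of_le_moments {n : ℕ} {V : Type*} [NormedAddCommGroup V]
    {g : EuclideanSpace ℝ (Fin n) → V} (hg : AEStronglyMeasurable g volume)
    (a b : ℝ) (k l : ℕ)
    (hbound : ∀ u, ‖g u‖ ≤ a * (‖u‖ ^ k * Real.exp (-‖u‖ ^ 2 / 2))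
      + b * (‖u‖ ^ l * Real.exp (-‖u‖ ^ 2 / 2))) :
    Integrable g := by
  refine (((sgl.integrable_norm_pow_gauss k).const_mul a).add
    ((sgl.integrable_norm_pow_gauss l).const_mul b)).mono' hg ?_
  filter_upwards with u
  exact hbound u

/-- derivative of the Gaussian weight -/
lemma sgl.hasDerivAt_gaussw (s : ℝ) :
    HasDerivAt (fun t : ℝ => Real.exp (-t ^ 2 / 2)) (Real.exp (-s ^ 2 / 2) * (-s)) s := by
  have h1 : HasDerivAt (fun t : ℝ => -t ^ 2 / 2) (-s) s := by
    have := ((hasDerivAt_pow 2 s).neg).div_const 2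
    refine this.congr_deriv ?_; push_cast; ring
  exact h1.exp

lemma sgl.gauss_bound_tendsto_atTop (A B : ℝ) :
    Tendsto (fun s : ℝ => (A + B * s ^ 2) * Real.exp (-s ^ 2 / 2)) atTop (𝓝 0) := by
  have hsq : Tendsto (fun s : ℝ => s ^ 2 / 2) atTop atTop :=
    (tendsto_pow_atTop (two_ne_zero)).atTop_div_const (by norm_num)
  have hneg : Tendsto (fun s : ℝ => -(s ^ 2 / 2)) atTop atBot := tendsto_neg_atBot_iff.mpr hsq
  have t1 : Tendsto (fun s : ℝ => Real.exp (-s ^ 2 / 2)) atTop (𝓝 0) := by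
    have := Real.tendsto_exp_atBot.comp hneg
    refine this.congr fun s => ?_
    simp only [Function.comp_apply]; ring_nf
  have t2 : Tendsto (fun s : ℝ => s ^ 2 * Real.exp (-s ^ 2 / 2)) atTop (𝓝 0) := by
    have h := (tendsto_pow_mul_exp_neg_atTop_nhds_zero 1).comp hsq
    have h2 := h.const_mul (2:ℝ)
    rw [mul_zero] at h2
    refine h2.congr fun s => ?_
    simp only [Function.comp_apply, pow_one]
    rw [show -(s ^ 2 / 2) = -s ^ 2 / 2 by ring]
    ring
  have h3 := (t1.const_mul A).add (t2.const_mul B)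
  rw [mul_zero, mul_zero, add_zero] at h3
  refine h3.congr fun s => ?_
  ring

lemma sgl.gauss_bound_tendsto_atBot (A B : ℝ) :
    Tendsto (fun s : ℝ => (A + B * s ^ 2) * Real.exp (-s ^ 2 / 2)) atBot (𝓝 0) := by
  have := (sgl.gauss_bound_tendsto_atTop A B).comp tendsto_neg_atBot_atTop
  refine this.congr fun s => ?_
  simp only [Function.comp_apply, neg_sq]

/-- 1D Stein identity -/
lemma sgl.stein1d {h h' : ℝ → ℝ} (hd : ∀ s, HasDerivAt h (h' s) s) {A B : ℝ}
    (hh : ∀ s, |h s| ≤ A + B * s ^ 2) (hh' : ∀ s, |h' s| ≤ A + B * |s|) :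
    ∫ s : ℝ, (h s * s * Real.exp (-s ^ 2 / 2) - h' s * Real.exp (-s ^ 2 / 2)) = 0 := by
  have habs := sgl.integrable_abs_pow_gauss
  have epos : ∀ s : ℝ, (0:ℝ) < Real.exp (-s ^ 2 / 2) := fun s => Real.exp_pos _
  have hcont : Continuous h := by
    have : Differentiable ℝ h := fun s => (hd s).differentiableAt
    exact this.continuous
  have hmeas' : AEStronglyMeasurable h' (volume : Measure ℝ) := by
    have he : h' = deriv h := funext fun s => ((hd s).deriv).symm
    rw [he]
    exact (measurable_deriv h).aestronglyMeasurable
  have Ih : Integrable (fun s : ℝ => h s * s * Real.exp (-s ^ 2 / 2)) := by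
    refine (((habs 1).const_mul A).add ((habs 3).const_mul B)).mono' ?_ ?_
    · exact ((hcont.mul continuous_id).mul (by continuity)).aestronglyMeasurable
    · filter_upwards with s
      have h1 := hh s
      have h2 : |s| ^ 3 = s ^ 2 * |s| := by
        rw [pow_succ, sq_abs]
      rw [norm_eq_abs, abs_mul, abs_mul, abs_of_nonneg (epos s).le]
      calc |h s| * |s| * Real.exp (-s ^ 2 / 2)
          ≤ (A + B * s ^ 2) * |s| * Real.exp (-s ^ 2 / 2) := by
            have := abs_nonneg s; have := (epos s).le; gcongr
        _ = A * (|s| ^ 1 * Real.exp (-s ^ 2 / 2)) + B * (|s| ^ 3 * Real.exp (-s ^ 2 / 2)) := by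
            rw [h2]; ring
  have Ih' : Integrable (fun s : ℝ => h' s * Real.exp (-s ^ 2 / 2)) := by
    refine (((habs 0).const_mul A).add ((habs 1).const_mul B)).mono' ?_ ?_
    · exact hmeas'.mul (by continuity : Continuous fun s : ℝ => Real.exp (-s^2/2)).aestronglyMeasurable
    · filter_upwards with s
      have h1 := hh' s
      rw [norm_eq_abs, abs_mul, abs_of_nonneg (epos s).le]
      calc |h' s| * Real.exp (-s ^ 2 / 2)
          ≤ (A + B * |s|) * Real.exp (-s ^ 2 / 2) := by
            have := (epos s).le; gcongr
        _ = A * (|s| ^ 0 * Real.exp (-s ^ 2 / 2)) + B * (|s| ^ 1 * Real.exp (-s ^ 2 / 2)) := by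
            simp; ring
  have hF : ∀ s, HasDerivAt (fun t => -(h t * Real.exp (-t ^ 2 / 2)))
      (h s * s * Real.exp (-s ^ 2 / 2) - h' s * Real.exp (-s ^ 2 / 2)) s := by
    intro s
    have := ((hd s).mul (sgl.hasDerivAt_gaussw s)).neg
    refine this.congr_deriv ?_
    ring
  have hsqz : ∀ s : ℝ, ‖-(h s * Real.exp (-s ^ 2 / 2))‖ ≤ (A + B * s ^ 2) * Real.exp (-s ^ 2 / 2) := by
    intro s
    rw [norm_neg, norm_eq_abs, abs_mul, abs_of_nonneg (epos s).le]
    have := (epos s).le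
    gcongr
    exact hh s
  have hFtop : Tendsto (fun s => -(h s * Real.exp (-s ^ 2 / 2))) atTop (𝓝 0) :=
    squeeze_zero_norm hsqz (sgl.gauss_bound_tendsto_atTop A B)
  have hFbot : Tendsto (fun s => -(h s * Real.exp (-s ^ 2 / 2))) atBot (𝓝 0) :=
    squeeze_zero_norm hsqz (sgl.gauss_bound_tendsto_atBot A B)
  have := integral_of_hasDerivAt_of_tendsto hF (Ih.sub Ih') hFbot hFtop
  simpa using this

section facts
variable {n : ℕ} {f : EuclideanSpace ℝ (Fin n) → ℝ} {L1 : ℝ}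

lemma sgl.norm_gradient_eq (z : EuclideanSpace ℝ (Fin n)) :
    ‖gradient f z‖ = ‖fderiv ℝ f z‖ :=
  LinearIsometryEquiv.norm_map _ _

lemma sgl.inner_gradient (z v : EuclideanSpace ℝ (Fin n)) :
    ⟪gradient f z, v⟫ = fderiv ℝ f z v := by
  rw [gradient, ← InnerProductSpace.toDual_apply_apply, LinearIsometryEquiv.apply_symm_apply]

lemma sgl.gradient_coord (z : EuclideanSpace ℝ (Fin n)) (i : Fin n) :
    gradient f z i = fderiv ℝ f z (EuclideanSpace.single i 1) := by
  rw [← sgl.inner_gradient, EuclideanSpace.inner_single_right]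
  simp

lemma sgl.abs_coord_le_norm (v : EuclideanSpace ℝ (Fin n)) (i : Fin n) :
    |v i| ≤ ‖v‖ := by
  have h := abs_real_inner_le_norm v (EuclideanSpace.single i (1:ℝ))
  rw [EuclideanSpace.inner_single_right, EuclideanSpace.norm_single] at h
  simpa using h

variable (hL : 0 ≤ L1)
  (hLip : ∀ x y : EuclideanSpace ℝ (Fin n),
      ‖gradient f y - gradient f x‖ ≤ L1 * ‖y - x‖)

include hLip in
lemma sgl.grad_growth (z w : EuclideanSpace ℝ (Fin n)) :
    ‖gradient f z‖ ≤ ‖gradient f w‖ + L1 * ‖z - w‖ := by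
  have h1 := hLip w z
  have h2 := norm_sub_norm_le (gradient f z) (gradient f w)
  linarith

include hLip in
lemma sgl.gradient_continuous : Continuous (gradient f) := by
  rcases le_or_gt L1 0 with h | h
  · have : ∀ z w : EuclideanSpace ℝ (Fin n), gradient f z = gradient f w := by
      intro z w
      have h1 := hLip w z
      have h2 : L1 * ‖z - w‖ ≤ 0 := mul_nonpos_of_nonpos_of_nonneg h (norm_nonneg _)
      have h3 : ‖gradient f z - gradient f w‖ = 0 := le_antisymm (h1.trans h2) (norm_nonneg _)
      rwa [norm_sub_eq_zero_iff] at h3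
    have : gradient f = fun _ => gradient f 0 := funext fun z => this z 0
    rw [this]; exact continuous_const
  · have : LipschitzWith (Real.toNNReal L1) (gradient f) := by
      apply LipschitzWith.of_dist_le_mul
      intro a b
      rw [dist_eq_norm, dist_eq_norm, Real.coe_toNNReal _ h.le]
      exact hLip b a
    exact this.continuous

variable (hdiff : Differentiable ℝ f)

include hdiff hLip hL in
lemma sgl.fdiff_bound (z w : EuclideanSpace ℝ (Fin n)) :
    |f z - f w| ≤ (‖gradient f w‖ + L1 * ‖z - w‖) * ‖z - w‖ := by
  have hconv : Convex ℝ (Metric.closedBall w ‖z - w‖) := convex_closedBall _ _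
  have hz : z ∈ Metric.closedBall w ‖z - w‖ := by
    simp [Metric.mem_closedBall, dist_eq_norm]
  have hw : w ∈ Metric.closedBall w ‖z - w‖ := Metric.mem_closedBall_self (norm_nonneg _)
  have := hconv.norm_image_sub_le_of_norm_fderiv_le
    (C := ‖gradient f w‖ + L1 * ‖z - w‖)
    (fun p _ => hdiff p)
    (fun p hp => by
      rw [← sgl.norm_gradient_eq (f := f)]
      have h1 := sgl.grad_growth hLip p w
      have h2 : ‖p - w‖ ≤ ‖z - w‖ := by
        rw [Metric.mem_closedBall, dist_eq_norm] at hp; exact hp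
      have : L1 * ‖p - w‖ ≤ L1 * ‖z - w‖ := by gcongr
      linarith) hw hz
  rw [Real.norm_eq_abs] at this
  exact this

end facts

lemma sgl.cont_affine {n : ℕ} (x : EuclideanSpace ℝ (Fin n)) (μ : ℝ) :
    Continuous (fun u : EuclideanSpace ℝ (Fin n) => x + μ • u) :=
  continuous_const.add (continuous_const.fun_smul continuous_id)

section main
variable {n : ℕ} {f : EuclideanSpace ℝ (Fin n) → ℝ} {L1 : ℝ}
  (hL : 0 ≤ L1)
  (hdiff : Differentiable ℝ f)
  (hLip : ∀ x y : EuclideanSpace ℝ (Fin n),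
      ‖gradient f y - gradient f x‖ ≤ L1 * ‖y - x‖)
  {μ : ℝ} (hμ : 0 < μ)

include hL hdiff hLip hμ in
/-- quotient bound : |(f (x+μu) - f x)/μ| ≤ (a₀ + L1 μ ‖u‖) ‖u‖ -/
lemma sgl.quot_bound (x u : EuclideanSpace ℝ (Fin n)) :
    |(f (x + μ • u) - f x) / μ| ≤ (‖gradient f x‖ + L1 * μ * ‖u‖) * ‖u‖ := by
  have h1 := sgl.fdiff_bound hL hLip hdiff (x + μ • u) x
  have h2 : x + μ • u - x = μ • u := by abel
  rw [h2] at h1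
  have h3 : ‖μ • u‖ = μ * ‖u‖ := by
    rw [norm_smul, Real.norm_eq_abs, abs_of_pos hμ]
  rw [h3] at h1
  rw [abs_div, abs_of_pos hμ, div_le_iff₀ hμ]
  calc |f (x + μ • u) - f x| ≤ (‖gradient f x‖ + L1 * (μ * ‖u‖)) * (μ * ‖u‖) := h1
    _ = (‖gradient f x‖ + L1 * μ * ‖u‖) * ‖u‖ * μ := by ring

include hL hdiff hLip hμ in
lemma sgl.integrable_vec_fd (x : EuclideanSpace ℝ (Fin n)) :
    Integrable (fun u : EuclideanSpace ℝ (Fin n) =>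
      (((f (x + μ • u) - f x) / μ) * Real.exp (-‖u‖ ^ 2 / 2)) • u) := by
  refine sgl.integrable_of_le_moments ?_ ‖gradient f x‖ (L1 * μ) 2 3 ?_
  · apply Continuous.aestronglyMeasurable
    apply Continuous.fun_smul ?_ continuous_id
    exact (((hdiff.continuous.comp (sgl.cont_affine x μ)).sub continuous_const).div_const μ).mul
      (by continuity)
  · intro u
    have epos : (0:ℝ) < Real.exp (-‖u‖ ^ 2 / 2) := Real.exp_pos _
    rw [norm_smul, norm_mul, Real.norm_eq_abs, Real.norm_eq_abs, abs_of_pos epos]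
    have h1 := sgl.quot_bound hL hdiff hLip hμ x u
    calc |(f (x + μ • u) - f x) / μ| * Real.exp (-‖u‖ ^ 2 / 2) * ‖u‖
        ≤ ((‖gradient f x‖ + L1 * μ * ‖u‖) * ‖u‖) * Real.exp (-‖u‖ ^ 2 / 2) * ‖u‖ := by
          have := epos.le; have := norm_nonneg u; gcongr
      _ = ‖gradient f x‖ * (‖u‖ ^ 2 * Real.exp (-‖u‖ ^ 2 / 2))
          + L1 * μ * (‖u‖ ^ 3 * Real.exp (-‖u‖ ^ 2 / 2)) := by ring

include hL hdiff hLip hμ in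
lemma sgl.integrable_vec_grad (x : EuclideanSpace ℝ (Fin n)) :
    Integrable (fun u : EuclideanSpace ℝ (Fin n) =>
      Real.exp (-‖u‖ ^ 2 / 2) • gradient f (x + μ • u)) := by
  refine sgl.integrable_of_le_moments ?_ ‖gradient f x‖ (L1 * μ) 0 1 ?_
  · apply Continuous.aestronglyMeasurable
    exact Continuous.fun_smul (by continuity)
      ((sgl.gradient_continuous hLip).comp (sgl.cont_affine x μ))
  · intro u
    have epos : (0:ℝ) < Real.exp (-‖u‖ ^ 2 / 2) := Real.exp_pos _
    rw [norm_smul, Real.norm_eq_abs, abs_of_pos epos]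
    have h1 := sgl.grad_growth hLip (x + μ • u) x
    have h2 : x + μ • u - x = μ • u := by abel
    rw [h2, norm_smul, Real.norm_eq_abs, abs_of_pos hμ] at h1
    calc Real.exp (-‖u‖ ^ 2 / 2) * ‖gradient f (x + μ • u)‖
        ≤ Real.exp (-‖u‖ ^ 2 / 2) * (‖gradient f x‖ + L1 * (μ * ‖u‖)) := by
          have := epos.le; gcongr
      _ = ‖gradient f x‖ * (‖u‖ ^ 0 * Real.exp (-‖u‖ ^ 2 / 2))
          + L1 * μ * (‖u‖ ^ 1 * Real.exp (-‖u‖ ^ 2 / 2)) := by ring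

include hL hdiff hLip hμ in
lemma sgl.integrable_coord_fd (x : EuclideanSpace ℝ (Fin n)) (i : Fin n) :
    Integrable (fun u : EuclideanSpace ℝ (Fin n) =>
      ((f (x + μ • u) - f x) / μ) * Real.exp (-‖u‖ ^ 2 / 2) * u i) := by
  refine sgl.integrable_of_le_moments ?_ ‖gradient f x‖ (L1 * μ) 2 3 ?_
  · apply Continuous.aestronglyMeasurable
    refine Continuous.mul ?_ ?_
    · exact (((hdiff.continuous.comp (sgl.cont_affine x μ)).sub continuous_const).div_const μ).mul
        (by continuity)
    · exact (EuclideanSpace.proj i).continuous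
  · intro u
    have epos : (0:ℝ) < Real.exp (-‖u‖ ^ 2 / 2) := Real.exp_pos _
    rw [Real.norm_eq_abs, abs_mul, abs_mul, abs_of_pos epos]
    have h1 := sgl.quot_bound hL hdiff hLip hμ x u
    have h2 := sgl.abs_coord_le_norm u i
    calc |(f (x + μ • u) - f x) / μ| * Real.exp (-‖u‖ ^ 2 / 2) * |u i|
        ≤ ((‖gradient f x‖ + L1 * μ * ‖u‖) * ‖u‖) * Real.exp (-‖u‖ ^ 2 / 2) * ‖u‖ := by
          have := epos.le; have := norm_nonneg u; have := abs_nonneg (u i); gcongr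
      _ = ‖gradient f x‖ * (‖u‖ ^ 2 * Real.exp (-‖u‖ ^ 2 / 2))
          + L1 * μ * (‖u‖ ^ 3 * Real.exp (-‖u‖ ^ 2 / 2)) := by ring

include hL hdiff hLip hμ in
lemma sgl.integrable_coord_grad (x : EuclideanSpace ℝ (Fin n)) (i : Fin n) :
    Integrable (fun u : EuclideanSpace ℝ (Fin n) =>
      Real.exp (-‖u‖ ^ 2 / 2) * gradient f (x + μ • u) i) := by
  refine sgl.integrable_of_le_moments ?_ ‖gradient f x‖ (L1 * μ) 0 1 ?_
  · apply Continuous.aestronglyMeasurable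
    exact Continuous.mul (by continuity)
      ((EuclideanSpace.proj i).continuous.comp
        ((sgl.gradient_continuous hLip).comp (sgl.cont_affine x μ)))
  · intro u
    have epos : (0:ℝ) < Real.exp (-‖u‖ ^ 2 / 2) := Real.exp_pos _
    rw [Real.norm_eq_abs, abs_mul, abs_of_pos epos]
    have h1 := sgl.grad_growth hLip (x + μ • u) x
    have h2 : x + μ • u - x = μ • u := by abel
    rw [h2, norm_smul, Real.norm_eq_abs, abs_of_pos hμ] at h1
    have h3 := sgl.abs_coord_le_norm (gradient f (x + μ • u)) i
    calc Real.exp (-‖u‖ ^ 2 / 2) * |gradient f (x + μ • u) i|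
        ≤ Real.exp (-‖u‖ ^ 2 / 2) * (‖gradient f x‖ + L1 * (μ * ‖u‖)) := by
          have := epos.le; gcongr; linarith
      _ = ‖gradient f x‖ * (‖u‖ ^ 0 * Real.exp (-‖u‖ ^ 2 / 2))
          + L1 * μ * (‖u‖ ^ 1 * Real.exp (-‖u‖ ^ 2 / 2)) := by ring


set_option maxHeartbeats 1000000 in
include hL hdiff hLip hμ in
lemma sgl.key_coord (hn : 1 ≤ n) (x : EuclideanSpace ℝ (Fin n)) (i : Fin n) :
    ∫ u : EuclideanSpace ℝ (Fin n),
      ((f (x + μ • u) - f x) / μ) * Real.exp (-‖u‖ ^ 2 / 2) * u i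
    = ∫ u : EuclideanSpace ℝ (Fin n),
      Real.exp (-‖u‖ ^ 2 / 2) * gradient f (x + μ • u) i := by
  have I1 := sgl.integrable_coord_fd hL hdiff hLip hμ x i
  have I2 := sgl.integrable_coord_grad hL hdiff hLip hμ x i
  rw [← sub_eq_zero, ← integral_sub I1 I2]
  obtain ⟨m, rfl⟩ : ∃ m, n = m + 1 := ⟨n - 1, (Nat.succ_pred_eq_of_pos hn).symm⟩
  set Φ : EuclideanSpace ℝ (Fin (m + 1)) → ℝ := fun u =>
    ((f (x + μ • u) - f x) / μ) * Real.exp (-‖u‖ ^ 2 / 2) * u i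
    - Real.exp (-‖u‖ ^ 2 / 2) * gradient f (x + μ • u) i with hΦdef
  show ∫ u, Φ u = 0
  -- transfer to ℝ × (Fin m → ℝ)
  set ψ : ℝ × (Fin m → ℝ) → EuclideanSpace ℝ (Fin (m + 1)) :=
    ⇑(MeasurableEquiv.toLp 2 (Fin (m + 1) → ℝ)) ∘
      ⇑(MeasurableEquiv.piFinSuccAbove (fun _ : Fin (m + 1) => ℝ) i).symm with hψdef
  have hψmp : MeasurePreserving ψ volume volume :=
    ((EuclideanSpace.volume_preserving_symm_measurableEquiv_toLp (Fin (m + 1))).symm).comp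
      ((volume_preserving_piFinSuccAbove (fun _ : Fin (m + 1) => ℝ) i).symm)
  have hemb : MeasurableEmbedding ψ :=
    (MeasurableEquiv.measurableEmbedding _).comp (MeasurableEquiv.measurableEmbedding _)
  have IΦ : Integrable Φ := I1.sub I2
  have IΦψ : Integrable (Φ ∘ ψ) := (hψmp.integrable_comp_emb hemb).mpr IΦ
  rw [← hψmp.integral_comp hemb Φ]
  rw [MeasureTheory.Measure.volume_eq_prod] at IΦψ ⊢
  have hps := integral_prod_symm (Φ ∘ ψ) IΦψ
  simp only [Function.comp_apply] at hps
  rw [hps]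
  -- coordinates of ψ
  have happ : ∀ (s : ℝ) (w : Fin m → ℝ) (j : Fin (m + 1)), ψ (s, w) j = Fin.insertNth (α := fun _ : Fin (m+1) => ℝ) i s w j := by
    intro s w j
    simp [hψdef, MeasurableEquiv.toLp, MeasurableEquiv.piFinSuccAbove]
    rfl
  have hinner : ∀ w : Fin m → ℝ, ∫ s : ℝ, Φ (ψ (s, w)) = 0 := by
    intro w
    set uu : ℝ → EuclideanSpace ℝ (Fin (m + 1)) := fun s => ψ (s, w) with huudef
    have hcoord_same : ∀ s : ℝ, uu s i = s := by
      intro s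
      show ψ (s, w) i = s
      rw [happ s w i, Fin.insertNth_apply_same]
    have hcoord_other : ∀ (s : ℝ) (j : Fin m), uu s (i.succAbove j) = w j := by
      intro s j
      show ψ (s, w) (i.succAbove j) = w j
      rw [happ s w _, Fin.insertNth_apply_succAbove]
    set Q2 : ℝ := ∑ j, w j ^ 2 with hQ2def
    have hQ2nn : 0 ≤ Q2 := Finset.sum_nonneg fun j _ => sq_nonneg _
    have hnorm : ∀ s : ℝ, ‖uu s‖ ^ 2 = s ^ 2 + Q2 := by
      intro s
      rw [EuclideanSpace.norm_eq, Real.sq_sqrt (Finset.sum_nonneg fun j _ => by positivity)]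
      rw [Fin.sum_univ_succAbove (fun j => ‖uu s j‖ ^ 2) i]
      rw [hQ2def]
      simp only [hcoord_same, hcoord_other, Real.norm_eq_abs, sq_abs]
    set bb : EuclideanSpace ℝ (Fin (m + 1)) := EuclideanSpace.single i 1 with hbbdef
    have huu_affine : ∀ s : ℝ, uu s = uu 0 + s • bb := by
      intro s
      ext j
      rw [PiLp.add_apply, PiLp.smul_apply]
      by_cases hj : j = i
      · subst hj
        rw [hcoord_same s, hcoord_same 0, hbbdef, EuclideanSpace.single_apply]
        simp
      · obtain ⟨k, rfl⟩ := Fin.exists_succAbove_eq hj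
        rw [hcoord_other s k, hcoord_other 0 k, hbbdef, EuclideanSpace.single_apply]
        simp [Fin.succAbove_ne i k]
    have haff : (fun s : ℝ => x + μ • uu s) = fun s => (x + μ • uu 0) + s • (μ • bb) := by
      funext s
      rw [huu_affine s, smul_add, smul_comm μ s bb, add_assoc]
    have hader : ∀ s : ℝ, HasDerivAt (fun t : ℝ => x + μ • uu t) (μ • bb) s := by
      intro s
      rw [haff]
      have h1 : HasDerivAt (fun t : ℝ => t • (μ • bb)) ((1:ℝ) • (μ • bb)) s :=
        (hasDerivAt_id s).smul_const (μ • bb)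
      rw [one_smul] at h1
      exact h1.const_add _
    set h : ℝ → ℝ := fun s => (f (x + μ • uu s) - f x) / μ with hhdef
    set h' : ℝ → ℝ := fun s => gradient f (x + μ • uu s) i with hh'def
    have hd : ∀ s, HasDerivAt h (h' s) s := by
      intro s
      have h1 : HasDerivAt (fun t => f (x + μ • uu t)) (fderiv ℝ f (x + μ • uu s) (μ • bb)) s :=
        (hdiff (x + μ • uu s)).hasFDerivAt.comp_hasDerivAt s (hader s)
      have h2 := (h1.sub_const (f x)).div_const μ
      have h3 : fderiv ℝ f (x + μ • uu s) (μ • bb) = μ * gradient f (x + μ • uu s) i := by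
        rw [(fderiv ℝ f (x + μ • uu s)).map_smul, sgl.gradient_coord (x + μ • uu s) i, hbbdef]
        simp
      refine h2.congr_deriv ?_
      rw [h3, hh'def]
      field_simp
    set Q : ℝ := Real.sqrt Q2 with hQdef
    have hQnn : 0 ≤ Q := Real.sqrt_nonneg _
    have hQsq : Q ^ 2 = Q2 := Real.sq_sqrt hQ2nn
    set a0 : ℝ := ‖gradient f x‖ with ha0def
    have ha0 : 0 ≤ a0 := norm_nonneg _
    set c : ℝ := L1 * μ with hcdef
    have hc : 0 ≤ c := mul_nonneg hL hμ.le
    have hr : ∀ s : ℝ, ‖uu s‖ ≤ |s| + Q := by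
      intro s
      have h1 : ‖uu s‖ ^ 2 ≤ (|s| + Q) ^ 2 := by
        rw [hnorm s]
        nlinarith [mul_nonneg (abs_nonneg s) hQnn, hQsq, sq_abs s]
      exact le_of_pow_le_pow_left₀ two_ne_zero (by positivity) h1
    have hhb : ∀ s, |h s| ≤ (a0 + c * ‖uu s‖) * ‖uu s‖ :=
      fun s => sgl.quot_bound hL hdiff hLip hμ x (uu s)
    have hh'b : ∀ s, |h' s| ≤ a0 + c * ‖uu s‖ := by
      intro s
      have h1 := sgl.abs_coord_le_norm (gradient f (x + μ • uu s)) i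
      have h2 := sgl.grad_growth hLip (x + μ • uu s) x
      have h3 : x + μ • uu s - x = μ • uu s := by abel
      rw [h3, norm_smul, Real.norm_eq_abs, abs_of_pos hμ] at h2
      calc |h' s| ≤ ‖gradient f (x + μ • uu s)‖ := h1
        _ ≤ a0 + L1 * (μ * ‖uu s‖) := h2
        _ = a0 + c * ‖uu s‖ := by rw [hcdef]; ring
    set A : ℝ := a0 + a0 * Q + 2 * c * Q + c * Q ^ 2 with hAdef
    set B : ℝ := a0 + c + 2 * c * Q with hBdef
    have habs1 : ∀ s : ℝ, |s| ≤ 1 + s ^ 2 := by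
      intro s; nlinarith [sq_nonneg (|s| - 1), sq_abs s]
    have hhA : ∀ s, |h s| ≤ A + B * s ^ 2 := by
      intro s
      have h1 : (a0 + c * ‖uu s‖) * ‖uu s‖ ≤ (a0 + c * (|s| + Q)) * (|s| + Q) := by
        have e1 := hr s; have e2 := norm_nonneg (uu s)
        nlinarith [mul_nonneg hc e2, mul_nonneg hc (abs_nonneg s), mul_nonneg hc hQnn]
      have h2 := habs1 s
      have h3 := (hhb s).trans h1
      rw [hAdef, hBdef]
      nlinarith [sq_abs s, mul_nonneg hc hQnn, mul_nonneg ha0 (abs_nonneg s),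
        mul_le_mul_of_nonneg_left h2 ha0,
        mul_le_mul_of_nonneg_left h2 (mul_nonneg (mul_nonneg (by norm_num : (0:ℝ) ≤ 2) hc) hQnn)]
    have hh'A : ∀ s, |h' s| ≤ A + B * |s| := by
      intro s
      have h0 : a0 + c * ‖uu s‖ ≤ a0 + c * (|s| + Q) := by
        have := hr s; nlinarith
      have h1 := (hh'b s).trans h0
      rw [hAdef, hBdef]
      nlinarith [abs_nonneg s, mul_nonneg ha0 hQnn, mul_nonneg hc hQnn,
        mul_nonneg (mul_nonneg hc hQnn) hQnn, mul_nonneg hc (abs_nonneg s),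
        mul_nonneg (mul_nonneg hc hQnn) (abs_nonneg s)]
    have hstein := sgl.stein1d hd hhA hh'A
    have hform : ∀ s : ℝ, Φ (ψ (s, w)) = Real.exp (-Q2 / 2)
        * (h s * s * Real.exp (-s ^ 2 / 2) - h' s * Real.exp (-s ^ 2 / 2)) := by
      intro s
      have e1 : Real.exp (-‖uu s‖ ^ 2 / 2) = Real.exp (-s ^ 2 / 2) * Real.exp (-Q2 / 2) := by
        rw [← Real.exp_add, hnorm s]; ring_nf
      show ((f (x + μ • uu s) - f x) / μ) * Real.exp (-‖uu s‖ ^ 2 / 2) * uu s i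
          - Real.exp (-‖uu s‖ ^ 2 / 2) * gradient f (x + μ • uu s) i = _
      rw [e1, hcoord_same s, hhdef, hh'def]
      ring
    simp only [hform]
    rw [integral_const_mul, hstein, mul_zero]
  have : (fun w => ∫ s : ℝ, Φ (ψ (s, w))) = fun _ => (0 : ℝ) := funext hinner
  rw [this, integral_zero]


include hL hdiff hLip hμ in
lemma sgl.key_vec (hn : 1 ≤ n) (x : EuclideanSpace ℝ (Fin n)) :
    (∫ u : EuclideanSpace ℝ (Fin n),
      (((f (x + μ • u) - f x) / μ) * Real.exp (-‖u‖ ^ 2 / 2)) • u)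
    = ∫ u : EuclideanSpace ℝ (Fin n),
      Real.exp (-‖u‖ ^ 2 / 2) • gradient f (x + μ • u) := by
  have Ia := sgl.integrable_vec_fd hL hdiff hLip hμ x
  have Ib := sgl.integrable_vec_grad hL hdiff hLip hμ x
  apply PiLp.ext
  intro i
  have hc1 : (EuclideanSpace.proj i) (∫ u : EuclideanSpace ℝ (Fin n),
      (((f (x + μ • u) - f x) / μ) * Real.exp (-‖u‖ ^ 2 / 2)) • u)
      = ∫ u, (EuclideanSpace.proj i) ((((f (x + μ • u) - f x) / μ) * Real.exp (-‖u‖ ^ 2 / 2)) • u) :=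
    (ContinuousLinearMap.integral_comp_comm _ Ia).symm
  have hc2 : (EuclideanSpace.proj i) (∫ u : EuclideanSpace ℝ (Fin n),
      Real.exp (-‖u‖ ^ 2 / 2) • gradient f (x + μ • u))
      = ∫ u, (EuclideanSpace.proj i) (Real.exp (-‖u‖ ^ 2 / 2) • gradient f (x + μ • u)) :=
    (ContinuousLinearMap.integral_comp_comm _ Ib).symm
  show (EuclideanSpace.proj i) _ = (EuclideanSpace.proj i) _
  rw [hc1, hc2]
  have e1 : ∀ u : EuclideanSpace ℝ (Fin n),
      (EuclideanSpace.proj i) ((((f (x + μ • u) - f x) / μ) * Real.exp (-‖u‖ ^ 2 / 2)) • u)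
      = ((f (x + μ • u) - f x) / μ) * Real.exp (-‖u‖ ^ 2 / 2) * u i := by
    intro u; simp [EuclideanSpace.proj]
  have e2 : ∀ u : EuclideanSpace ℝ (Fin n),
      (EuclideanSpace.proj i) (Real.exp (-‖u‖ ^ 2 / 2) • gradient f (x + μ • u))
      = Real.exp (-‖u‖ ^ 2 / 2) * gradient f (x + μ • u) i := by
    intro u; simp [EuclideanSpace.proj]
  simp only [e1, e2]
  exact sgl.key_coord hL hdiff hLip hμ hn x i

lemma sgl.integral_gaussian_eucl (n : ℕ) :
    ∫ u : EuclideanSpace ℝ (Fin n), Real.exp (-‖u‖ ^ 2 / 2) = kappa n := by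
  have h := GaussianFourier.integral_rexp_neg_mul_sq_norm (V := EuclideanSpace ℝ (Fin n))
    (b := (1/2 : ℝ)) (by norm_num)
  have h2 : (fun u : EuclideanSpace ℝ (Fin n) => Real.exp (-‖u‖ ^ 2 / 2))
      = fun u : EuclideanSpace ℝ (Fin n) => Real.exp (-(1/2 : ℝ) * ‖u‖ ^ 2) := by
    funext u; ring_nf
  rw [h2, h, finrank_euclideanSpace, kappa]
  norm_num
  rw [show Real.pi / (1/2) = 2 * Real.pi by ring]

include hL hdiff hLip hμ in
theorem sgl.final (hn : 1 ≤ n) (x y : EuclideanSpace ℝ (Fin n)) :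
    ‖gsmoothGrad f μ y - gsmoothGrad f μ x‖ ≤ L1 * ‖y - x‖ := by
  have κpos : 0 < kappa n := Real.rpow_pos_of_pos (by positivity) _
  have Iby := sgl.integrable_vec_grad hL hdiff hLip hμ y
  have Ibx := sgl.integrable_vec_grad hL hdiff hLip hμ x
  rw [gsmoothGrad, gsmoothGrad, sgl.key_vec hL hdiff hLip hμ hn y,
    sgl.key_vec hL hdiff hLip hμ hn x, ← smul_sub, ← integral_sub Iby Ibx]
  have hpt : (fun u : EuclideanSpace ℝ (Fin n) =>
      Real.exp (-‖u‖ ^ 2 / 2) • gradient f (y + μ • u)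
        - Real.exp (-‖u‖ ^ 2 / 2) • gradient f (x + μ • u))
      = fun u => Real.exp (-‖u‖ ^ 2 / 2) • (gradient f (y + μ • u) - gradient f (x + μ • u)) := by
    funext u; rw [smul_sub]
  rw [hpt, norm_smul, Real.norm_eq_abs, abs_of_pos (inv_pos.mpr κpos)]
  have Igw : Integrable (fun u : EuclideanSpace ℝ (Fin n) => Real.exp (-‖u‖ ^ 2 / 2)) := by
    have := sgl.integrable_norm_pow_gauss (n := n) 0
    simpa using this
  have int1 : Integrable (fun u : EuclideanSpace ℝ (Fin n) =>
      ‖Real.exp (-‖u‖ ^ 2 / 2) • (gradient f (y + μ • u) - gradient f (x + μ • u))‖) :=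
    by
      have h0 := (Iby.sub Ibx).norm
      refine h0.congr (Filter.Eventually.of_forall fun u => ?_)
      simp only [Pi.sub_apply, ← smul_sub]
  have int2 : Integrable (fun u : EuclideanSpace ℝ (Fin n) =>
      Real.exp (-‖u‖ ^ 2 / 2) * (L1 * ‖y - x‖)) := Igw.mul_const _
  have hptle : ∀ u : EuclideanSpace ℝ (Fin n),
      ‖Real.exp (-‖u‖ ^ 2 / 2) • (gradient f (y + μ • u) - gradient f (x + μ • u))‖
      ≤ Real.exp (-‖u‖ ^ 2 / 2) * (L1 * ‖y - x‖) := by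
    intro u
    rw [norm_smul, Real.norm_eq_abs, abs_of_pos (Real.exp_pos _)]
    have h1 := hLip (x + μ • u) (y + μ • u)
    have h2 : y + μ • u - (x + μ • u) = y - x := by abel
    rw [h2] at h1
    have := (Real.exp_pos (-‖u‖ ^ 2 / 2)).le
    gcongr
  have hbound : ‖∫ u : EuclideanSpace ℝ (Fin n),
      Real.exp (-‖u‖ ^ 2 / 2) • (gradient f (y + μ • u) - gradient f (x + μ • u))‖
      ≤ kappa n * (L1 * ‖y - x‖) := by
    calc ‖∫ u : EuclideanSpace ℝ (Fin n),
        Real.exp (-‖u‖ ^ 2 / 2) • (gradient f (y + μ • u) - gradient f (x + μ • u))‖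
        ≤ ∫ u : EuclideanSpace ℝ (Fin n),
          ‖Real.exp (-‖u‖ ^ 2 / 2) • (gradient f (y + μ • u) - gradient f (x + μ • u))‖ :=
          norm_integral_le_integral_norm _
      _ ≤ ∫ u : EuclideanSpace ℝ (Fin n), Real.exp (-‖u‖ ^ 2 / 2) * (L1 * ‖y - x‖) :=
          integral_mono int1 int2 hptle
      _ = (∫ u : EuclideanSpace ℝ (Fin n), Real.exp (-‖u‖ ^ 2 / 2)) * (L1 * ‖y - x‖) :=
          integral_mul_const _ _
      _ = kappa n * (L1 * ‖y - x‖) := by rw [sgl.integral_gaussian_eucl]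
  calc (kappa n)⁻¹ * ‖∫ u : EuclideanSpace ℝ (Fin n),
        Real.exp (-‖u‖ ^ 2 / 2) • (gradient f (y + μ • u) - gradient f (x + μ • u))‖
      ≤ (kappa n)⁻¹ * (kappa n * (L1 * ‖y - x‖)) := by gcongr
    _ = L1 * ‖y - x‖ := by field_simp


end main

/-- If `∇f` is `L₁`-Lipschitz then so is the gradient of the Gaussian smoothing:
`‖∇f_μ(y) − ∇f_μ(x)‖ ≤ L₁ ‖y − x‖`. -/
theorem smoothed_gradient_lipschitz_of_lipschitz_gradient {n : ℕ} (hn : 1 ≤ n)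
    (f : EuclideanSpace ℝ (Fin n) → ℝ) (L1 : ℝ) (hL : 0 ≤ L1)
    (hdiff : Differentiable ℝ f)
    (hLip : ∀ x y : EuclideanSpace ℝ (Fin n),
      ‖gradient f y - gradient f x‖ ≤ L1 * ‖y - x‖)
    (μ : ℝ) (hμ : 0 < μ) (x y : EuclideanSpace ℝ (Fin n)) :
    ‖gsmoothGrad f μ y - gsmoothGrad f μ x‖ ≤ L1 * ‖y - x‖ :=
  sgl.final hL hdiff hLip hμ hn x y
end
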